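/- arXiv:1611.07185 — 5 statements merged into one kernel-verified Lean document; each statement's English description precedes it below -/
import Mathlib

section
/- Let G be a connected simple graph on n vertices with adjacency matrix A and vertex degrees d_1, ..., d_n. Then the spectral radius ρ(G) of A satisfies ρ(G) ≥ ((1/n) ∑_{i=1}^n d_i^2)^{1/2}. -/
open scoped Matrix


theorem stmt_5 (n : ℕ) (hn : 0 < n) (G : SimpleGraph (Fin n)) [DecidableRel G.Adj]
    (hG : G.Connected) (ρ : ℝ)
    (hρ : IsGreatest {μ : ℝ | Module.End.HasEigenvalue
        (Matrix.toLin' (G.adjMatrix ℝ)) μ} ρ) :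
    Real.sqrt ((1 / (n : ℝ)) * ∑ i, (G.degree i : ℝ) ^ 2) ≤ ρ := by
  classical
  set A : Matrix (Fin n) (Fin n) ℝ := G.adjMatrix ℝ with hAdef
  have hsymm : Aᵀ = A := G.isSymm_adjMatrix
  have hA : A.IsHermitian := by
    rwa [Matrix.IsHermitian, Matrix.conjTranspose_eq_transpose_of_trivial]
  set b := hA.eigenvectorBasis with hbdef
  set lam := hA.eigenvalues with hlamdef
  have hmul : ∀ j, A *ᵥ ⇑(b j) = lam j • ⇑(b j) := hA.mulVec_eigenvectorBasis
  -- inner product as a sum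
  have hinner : ∀ x y : EuclideanSpace ℝ (Fin n), (inner ℝ x y : ℝ) = ∑ i, x i * y i := by
    intro x y
    simp [PiLp.inner_apply, RCLike.inner_apply, mul_comm]
  -- each eigenvalue is ≤ ρ
  have hlamle : ∀ j, lam j ≤ ρ := by
    intro j
    apply hρ.2
    have hv : (b j : EuclideanSpace ℝ (Fin n)) ≠ 0 := by
      simpa using b.orthonormal.ne_zero j
    have hvmem : Module.End.HasEigenvector (Matrix.toLin' A) (lam j) ⇑(b j) := by
      refine ⟨?_, ?_⟩
      · rw [Module.End.mem_eigenspace_iff, Matrix.toLin'_apply, hmul j]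
      · intro h
        exact hv (by ext i; exact congrFun h i)
    exact Module.End.hasEigenvalue_of_hasEigenvector hvmem
  -- key inner product identity
  have hAinner : ∀ (j) (x : EuclideanSpace ℝ (Fin n)),
      (inner ℝ (b j) (WithLp.toLp 2 (A *ᵥ x : Fin n → ℝ) : EuclideanSpace ℝ (Fin n)) : ℝ)
        = lam j * inner ℝ (b j) x := by
    intro j x
    rw [hinner, hinner]
    have : ∑ i, (b j) i * (A *ᵥ x) i = (⇑(b j)) ⬝ᵥ (A *ᵥ (x : Fin n → ℝ)) := rfl
    rw [this, Matrix.dotProduct_mulVec, ← Matrix.mulVec_transpose, hsymm, hmul j]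
    simp [dotProduct, Finset.mul_sum, mul_assoc]
  -- quadratic form expansion
  have hquad : ∀ x : EuclideanSpace ℝ (Fin n),
      (inner ℝ x (WithLp.toLp 2 (A *ᵥ x : Fin n → ℝ) : EuclideanSpace ℝ (Fin n)) : ℝ)
        = ∑ j, lam j * (inner ℝ (b j) x : ℝ) ^ 2 := by
    intro x
    rw [← b.sum_inner_mul_inner x]
    refine Finset.sum_congr rfl fun j _ => ?_
    rw [hAinner j x, real_inner_comm x (b j)]
    ring
  -- Parseval
  have hpars : ∀ x : EuclideanSpace ℝ (Fin n),
      (inner ℝ x x : ℝ) = ∑ j, (inner ℝ (b j) x : ℝ) ^ 2 := by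
    intro x
    rw [← b.sum_inner_mul_inner x x]
    refine Finset.sum_congr rfl fun j _ => ?_
    rw [real_inner_comm x (b j)]; ring
  -- upper bound on quadratic form
  have hquadle : ∀ x : EuclideanSpace ℝ (Fin n),
      (inner ℝ x (WithLp.toLp 2 (A *ᵥ x : Fin n → ℝ) : EuclideanSpace ℝ (Fin n)) : ℝ) ≤ ρ * inner ℝ x x := by
    intro x
    rw [hquad, hpars, Finset.mul_sum]
    refine Finset.sum_le_sum fun j _ => ?_
    exact mul_le_mul_of_nonneg_right (hlamle j) (sq_nonneg _)
  -- nonneg entries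
  have hApos : ∀ i k, 0 ≤ A i k := by
    intro i k
    simp only [hAdef, SimpleGraph.adjMatrix_apply]
    positivity
  -- ρ ≥ 0
  have hρ0 : 0 ≤ ρ := by
    set u : EuclideanSpace ℝ (Fin n) := WithLp.toLp 2 (fun _ => 1) with hu
    have h1 : (0:ℝ) ≤ inner ℝ u (WithLp.toLp 2 (A *ᵥ u : Fin n → ℝ) : EuclideanSpace ℝ (Fin n)) := by
      rw [hinner]
      refine Finset.sum_nonneg fun i _ => ?_
      have h3 : u i * (A *ᵥ (u : Fin n → ℝ)) i = ∑ k, A i k * u k := by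
        simp [hu, Matrix.mulVec, dotProduct]
      rw [h3]
      exact Finset.sum_nonneg fun k _ => by simpa [hu] using hApos i k
    have h2 : (inner ℝ u u : ℝ) = n := by
      rw [hinner]; simp [hu]
    have := le_trans h1 (hquadle u)
    have hn' : (0:ℝ) < n := by exact_mod_cast hn
    nlinarith
  -- Perron: |lam j| ≤ ρ
  have habs : ∀ j, |lam j| ≤ ρ := by
    intro j
    set v : EuclideanSpace ℝ (Fin n) := b j with hv
    set w : EuclideanSpace ℝ (Fin n) := WithLp.toLp 2 (fun i => |v i|) with hw
    have hvv : (inner ℝ v v : ℝ) = 1 := by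
      have := b.orthonormal.1 j
      rw [real_inner_self_eq_norm_sq]
      rw [show ‖v‖ = ‖b j‖ from rfl, this]; norm_num
    have hww : (inner ℝ w w : ℝ) = 1 := by
      rw [hinner, ← hvv, hinner]
      refine Finset.sum_congr rfl fun i _ => ?_
      simp [hw, abs_mul_abs_self]
    have hvAv : (inner ℝ v (WithLp.toLp 2 (A *ᵥ v : Fin n → ℝ) : EuclideanSpace ℝ (Fin n)) : ℝ) = lam j := by
      rw [hinner, show (A *ᵥ (v : Fin n → ℝ)) = lam j • ⇑(b j) from hmul j]
      have : ∑ i, v i * (lam j • ⇑(b j)) i = lam j * ∑ i, v i * v i := by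
        rw [Finset.mul_sum]
        refine Finset.sum_congr rfl fun i _ => ?_
        simp [hv, Pi.smul_apply]; ring
      rw [this, ← hinner, hvv, mul_one]
    have step1 : |lam j| ≤ (inner ℝ w (WithLp.toLp 2 (A *ᵥ w : Fin n → ℝ) : EuclideanSpace ℝ (Fin n)) : ℝ) := by
      rw [← hvAv, hinner, hinner]
      calc |∑ i, v i * (A *ᵥ (v : Fin n → ℝ)) i|
          ≤ ∑ i, |v i * (A *ᵥ (v : Fin n → ℝ)) i| := Finset.abs_sum_le_sum_abs _ _
        _ ≤ ∑ i, w i * (A *ᵥ (w : Fin n → ℝ)) i := by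
            refine Finset.sum_le_sum fun i _ => ?_
            rw [abs_mul]
            refine mul_le_mul_of_nonneg_left ?_ (abs_nonneg _)
            calc |(A *ᵥ (v : Fin n → ℝ)) i| = |∑ k, A i k * v k| := rfl
              _ ≤ ∑ k, |A i k * v k| := Finset.abs_sum_le_sum_abs _ _
              _ = ∑ k, A i k * w k := by
                  refine Finset.sum_congr rfl fun k _ => ?_
                  rw [abs_mul, abs_of_nonneg (hApos i k)]
              _ = (A *ᵥ (w : Fin n → ℝ)) i := rfl
    calc |lam j| ≤ _ := step1
      _ ≤ ρ * inner ℝ w w := hquadle w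
      _ = ρ := by rw [hww, mul_one]
  -- eigenvalue squares bounded
  have hsq : ∀ j, lam j ^ 2 ≤ ρ ^ 2 := by
    intro j
    have := habs j
    nlinarith [abs_nonneg (lam j), sq_abs (lam j)]
  -- main computation with the all-ones vector
  set u : EuclideanSpace ℝ (Fin n) := WithLp.toLp 2 (fun _ => 1) with hu
  set d : EuclideanSpace ℝ (Fin n) := (WithLp.toLp 2 (A *ᵥ (u : Fin n → ℝ) : Fin n → ℝ) : EuclideanSpace ℝ (Fin n)) with hd
  have hdeg : ∀ i, d i = (G.degree i : ℝ) := by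
    intro i
    have : d i = (G.adjMatrix ℝ *ᵥ Function.const (Fin n) (1:ℝ)) i := rfl
    rw [this, SimpleGraph.adjMatrix_mulVec_const_apply, mul_one]
  have hS : ∑ i, (G.degree i : ℝ) ^ 2 = (inner ℝ d d : ℝ) := by
    rw [hinner]
    refine Finset.sum_congr rfl fun i _ => ?_
    rw [hdeg i]; ring
  have hdexp : (inner ℝ d d : ℝ) = ∑ j, lam j ^ 2 * (inner ℝ (b j) u : ℝ) ^ 2 := by
    rw [hpars d]
    refine Finset.sum_congr rfl fun j _ => ?_
    rw [hd, hAinner j u]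
    ring
  have hbound : (inner ℝ d d : ℝ) ≤ ρ ^ 2 * n := by
    have huu : (inner ℝ u u : ℝ) = n := by rw [hinner]; simp [hu]
    calc (inner ℝ d d : ℝ) = ∑ j, lam j ^ 2 * (inner ℝ (b j) u : ℝ) ^ 2 := hdexp
      _ ≤ ∑ j, ρ ^ 2 * (inner ℝ (b j) u : ℝ) ^ 2 :=
          Finset.sum_le_sum fun j _ => mul_le_mul_of_nonneg_right (hsq j) (sq_nonneg _)
      _ = ρ ^ 2 * inner ℝ u u := by rw [hpars u, Finset.mul_sum]
      _ = ρ ^ 2 * n := by rw [huu]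
  -- conclude
  have hn' : (0:ℝ) < n := by exact_mod_cast hn
  have hfin : (1 / (n : ℝ)) * ∑ i, (G.degree i : ℝ) ^ 2 ≤ ρ ^ 2 := by
    rw [hS]
    rw [div_mul_eq_mul_div, one_mul, div_le_iff₀ hn']
    linarith [hbound]
  calc Real.sqrt ((1 / (n : ℝ)) * ∑ i, (G.degree i : ℝ) ^ 2)
      ≤ Real.sqrt (ρ ^ 2) := Real.sqrt_le_sqrt hfin
    _ = ρ := by rw [Real.sqrt_sq hρ0]
end

section
/- Let A be an order-r dimension-n tensor and B an order-r dimension-m tensor. If λ is an eigenvalue of A with eigenvector u (i.e., (Au)_i = λ u_i^{r-1} where (Au)_i = ∑_{i_2,...,i_r} a_{i i_2 ⋯ i_r} u_{i_2} ⋯ u_{i_r}) and μ is an eigenvalue of B with eigenvector v, then λμ is an eigenvalue of the direct (Kronecker) product A ⊗ B with eigenvector u ⊗ v, where (A⊗B)_{(i_1,j_1)⋯(i_r,j_r)} = a_{i_1⋯i_r} b_{j_1⋯j_r} and (u⊗v)_{(i,j)} = u_i v_j. -/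
/-- Direct (Kronecker) product of two order-`r` tensors. -/
def kron {α β : Type*} {r : ℕ} (A : (Fin r → α) → ℂ) (B : (Fin r → β) → ℂ) :
    (Fin r → α × β) → ℂ :=
  fun t => A (fun k => (t k).1) * B (fun k => (t k).2)

/-- Multilinear action of an order-`(r+1)` tensor on a vector:
`(Ax)_i = ∑_{i₂,…,i_{r+1}} a_{i i₂ ⋯ i_{r+1}} x_{i₂} ⋯ x_{i_{r+1}}`. -/
noncomputable def tact {α : Type*} [Fintype α] {r : ℕ} (A : (Fin (r + 1) → α) → ℂ)
    (x : α → ℂ) (i : α) : ℂ :=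
  ∑ s : Fin r → α, A (Fin.cons i s) * ∏ k, x (s k)

theorem stmt_8 (n m r : ℕ) (A : (Fin (r + 1) → Fin n) → ℂ)
    (B : (Fin (r + 1) → Fin m) → ℂ) (lam mu : ℂ)
    (u : Fin n → ℂ) (v : Fin m → ℂ) (hu : u ≠ 0) (hv : v ≠ 0)
    (hA : ∀ i, tact A u i = lam * u i ^ r)
    (hB : ∀ j, tact B v j = mu * v j ^ r) :
    (fun p : Fin n × Fin m => u p.1 * v p.2) ≠ 0 ∧
      ∀ p : Fin n × Fin m,
        tact (kron A B) (fun q : Fin n × Fin m => u q.1 * v q.2) p =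
          (lam * mu) * (u p.1 * v p.2) ^ r := by
  constructor
  · obtain ⟨i, hi⟩ := Function.ne_iff.mp hu
    obtain ⟨j, hj⟩ := Function.ne_iff.mp hv
    intro h
    exact mul_ne_zero hi hj (congrFun h (i, j))
  · intro p
    have key : tact (kron A B) (fun q : Fin n × Fin m => u q.1 * v q.2) p =
        tact A u p.1 * tact B v p.2 := by
      unfold tact kron
      rw [Finset.sum_mul_sum]
      rw [← (Equiv.arrowProdEquivProdArrow (Fin r) (fun _ => Fin n) (fun _ => Fin m)).symm.sum_comp]
      rw [Fintype.sum_prod_type]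
      refine Finset.sum_congr rfl fun a _ => Finset.sum_congr rfl fun b _ => ?_
      have h1 : (fun k => ((Fin.cons p ((Equiv.arrowProdEquivProdArrow (Fin r) (fun _ => Fin n) (fun _ => Fin m)).symm (a, b)) : Fin (r+1) → Fin n × Fin m) k).1) = Fin.cons p.1 a := by
        funext k
        refine Fin.cases rfl (fun k => ?_) k
        simp [Equiv.arrowProdEquivProdArrow]
      have h2 : (fun k => ((Fin.cons p ((Equiv.arrowProdEquivProdArrow (Fin r) (fun _ => Fin n) (fun _ => Fin m)).symm (a, b)) : Fin (r+1) → Fin n × Fin m) k).2) = Fin.cons p.2 b := by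
        funext k
        refine Fin.cases rfl (fun k => ?_) k
        simp [Equiv.arrowProdEquivProdArrow]
      rw [h1, h2]
      simp [Equiv.arrowProdEquivProdArrow, Finset.prod_mul_distrib]
      ring
    rw [key, hA, hB]
    ring
end

section
/- Suppose H is an r-uniform hypergraph on n vertices with r ≥ 3, with vertex degrees d_1, ..., d_n and spectral radius ρ(H) of its adjacency tensor. Then ρ(H) ≥ ((1/n) ∑_{i=1}^n d_i^{r/(r-1)})^{(r-1)/r}. -/
/-- Degree of a vertex in a hypergraph: the number of edges containing it. -/
def hDeg {V : Type*} [DecidableEq V] (E : Finset (Finset V)) (i : V) : ℕ :=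
  (E.filter (fun e => i ∈ e)).card

/-- Adjacency tensor of an `r`-uniform hypergraph: entry `1/(r-1)!` on index tuples
whose underlying set is an edge, and `0` otherwise. -/
noncomputable def adjT {V : Type*} [DecidableEq V] (r : ℕ) (E : Finset (Finset V)) :
    (Fin r → V) → ℝ :=
  fun t => if Finset.image t Finset.univ ∈ E then 1 / ((r - 1).factorial : ℝ) else 0

/-- The quadratic-type form `x^T (T x) = ∑ t, T_t ∏ₖ x_{tₖ}` of an order-`r` tensor. -/
noncomputable def form {V : Type*} [Fintype V] {r : ℕ} (T : (Fin r → V) → ℝ) (x : V → ℝ) : ℝ :=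
  ∑ t : Fin r → V, T t * ∏ k, x (t k)

/-- Spectral radius of a nonnegative symmetric order-`r` tensor, via the variational
characterization: the supremum of `x^T (T x)` over nonnegative `x` with `∑ xᵢ^r = 1`. -/
noncomputable def specRad {V : Type*} [Fintype V] {r : ℕ}
    (T : (Fin r → V) → ℝ) : ℝ :=
  sSup {q : ℝ | ∃ x : V → ℝ, (∀ i, 0 ≤ x i) ∧ (∑ i, x i ^ r = 1) ∧ q = form T x}

open Finset

lemma adjT_nonneg {V : Type*} [DecidableEq V] (r : ℕ) (E : Finset (Finset V))
    (t : Fin r → V) : 0 ≤ adjT r E t := by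
  unfold adjT; split <;> positivity

lemma adjT_le_one {V : Type*} [DecidableEq V] (r : ℕ) (E : Finset (Finset V))
    (t : Fin r → V) : adjT r E t ≤ 1 := by
  unfold adjT
  split
  · rw [div_le_one (by exact_mod_cast Nat.factorial_pos _)]
    exact_mod_cast Nat.one_le_iff_ne_zero.2 (Nat.factorial_ne_zero _)
  · norm_num

lemma bdd_specRad {V : Type*} [Fintype V] [DecidableEq V] {r : ℕ} (hr : r ≠ 0)
    (E : Finset (Finset V)) :
    BddAbove {q : ℝ | ∃ x : V → ℝ, (∀ i, 0 ≤ x i) ∧ (∑ i, x i ^ r = 1) ∧ q = form (adjT r E) x} := by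
  refine ⟨(Fintype.card (Fin r → V) : ℝ), ?_⟩
  rintro p ⟨x, hx, hxs, rfl⟩
  have hx1 : ∀ i, x i ≤ 1 := by
    intro i
    have h1 : x i ^ r ≤ 1 := by
      rw [← hxs]
      exact Finset.single_le_sum (fun j _ => pow_nonneg (hx j) r) (Finset.mem_univ i)
    exact (pow_le_one_iff_of_nonneg (hx i) hr).1 h1
  have : ∀ t : Fin r → V, adjT r E t * ∏ k, x (t k) ≤ 1 := by
    intro t
    have hp : ∏ k, x (t k) ≤ 1 :=
      Finset.prod_le_one (fun k _ => hx (t k)) (fun k _ => hx1 (t k))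
    have hp0 : 0 ≤ ∏ k, x (t k) := Finset.prod_nonneg fun k _ => hx (t k)
    calc adjT r E t * ∏ k, x (t k) ≤ 1 * 1 :=
          mul_le_mul (adjT_le_one r E t) hp hp0 zero_le_one
      _ = 1 := mul_one 1
  calc form (adjT r E) x ≤ ∑ _t : Fin r → V, (1:ℝ) := Finset.sum_le_sum fun t _ => this t
    _ = (Fintype.card (Fin r → V) : ℝ) := by
        rw [Finset.sum_const, Finset.card_univ, nsmul_eq_mul, mul_one]

lemma form_nonneg {V : Type*} [Fintype V] [DecidableEq V] {r : ℕ}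
    (E : Finset (Finset V)) (x : V → ℝ) (hx : ∀ i, 0 ≤ x i) :
    0 ≤ form (adjT r E) x :=
  Finset.sum_nonneg fun t _ =>
    mul_nonneg (adjT_nonneg r E t) (Finset.prod_nonneg fun k _ => hx (t k))

lemma edge_bound {V : Type*} [DecidableEq V] {r : ℕ} (hr : 2 ≤ r) (e : Finset V)
    (he : e.card = r) (x : V → ℝ) (hx : ∀ i, 0 ≤ x i) (z : ℝ) (hz : 0 < z) :
    (∑ c ∈ e, x c) * z ^ (r - 1) ≤
      (r : ℝ) * ∏ i ∈ e, ((x i ^ r + ((r : ℝ) - 1) * z ^ r) / r) ^ ((r : ℝ))⁻¹ := by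
  have hr0 : (0 : ℝ) < r := by
    have : 0 < r := by omega
    exact_mod_cast this
  have hr1 : (0 : ℝ) < (r : ℝ) - 1 := by
    have : (1 : ℝ) < r := by exact_mod_cast (by omega : 1 < r)
    linarith
  set u : V → ℝ := fun i => x i ^ r + ((r : ℝ) - 1) * z ^ r with hu_def
  have hu_pos : ∀ i, 0 < u i := fun i => by
    have : 0 < z ^ r := pow_pos hz r
    have : 0 < ((r : ℝ) - 1) * z ^ r := by positivity
    have hx' : 0 ≤ x i ^ r := pow_nonneg (hx i) r
    simp only [hu_def]; linarith
  -- P := (∏ u)^{1/r}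
  set P : ℝ := (∏ i ∈ e, u i) ^ ((r : ℝ))⁻¹ with hP_def
  have huprod_pos : 0 < ∏ i ∈ e, u i := Finset.prod_pos fun i _ => hu_pos i
  have hP_pos : 0 < P := Real.rpow_pos_of_pos huprod_pos _
  -- RHS equals P
  have hRHS : (r : ℝ) * ∏ i ∈ e, (u i / r) ^ ((r : ℝ))⁻¹ = P := by
    have h1 : ∏ i ∈ e, (u i / r) ^ ((r : ℝ))⁻¹ = (∏ i ∈ e, (u i / r)) ^ ((r : ℝ))⁻¹ :=
      Real.finset_prod_rpow e _ (fun i _ => div_nonneg (hu_pos i).le hr0.le) _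
    have h2 : ∏ i ∈ e, (u i / r) = (∏ i ∈ e, u i) / (r : ℝ) ^ r := by
      rw [Finset.prod_div_distrib, Finset.prod_const, he]
    have h3 : ((r : ℝ) ^ r) ^ ((r : ℝ))⁻¹ = (r : ℝ) := by
      rw [← Real.rpow_natCast (r : ℝ) r, ← Real.rpow_mul hr0.le,
        mul_inv_cancel₀ (ne_of_gt hr0), Real.rpow_one]
    rw [h1, h2, Real.div_rpow huprod_pos.le (by positivity), h3]
    field_simp [hP_def]
    rw [hP_def, one_div]
  rw [hRHS]
  -- key per-c bound
  have key : ∀ c ∈ e, x c * z ^ (r - 1) ≤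
      P * ∑ i ∈ e, (r : ℝ)⁻¹ * ((if i = c then x c ^ r else z ^ r) / u i) := by
    intro c hc
    set g : V → ℝ := fun i => if i = c then x c ^ r else z ^ r with hg_def
    have hg_nonneg : ∀ i, 0 ≤ g i := fun i => by
      simp only [hg_def]; split
      · exact pow_nonneg (hx c) r
      · positivity
    have amgm : ∏ i ∈ e, (g i / u i) ^ ((r : ℝ))⁻¹ ≤ ∑ i ∈ e, (r : ℝ)⁻¹ * (g i / u i) := by
      have := Real.geom_mean_le_arith_mean_weighted e (fun _ => (r : ℝ)⁻¹)
        (fun i => g i / u i) (fun i _ => by positivity)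
        (by rw [Finset.sum_const, he, nsmul_eq_mul, mul_inv_cancel₀ (ne_of_gt hr0)])
        (fun i _ => div_nonneg (hg_nonneg i) (hu_pos i).le)
      exact this
    have hprod_split : ∏ i ∈ e, (g i / u i) ^ ((r : ℝ))⁻¹
        = (∏ i ∈ e, (g i) ^ ((r : ℝ))⁻¹) / P := by
      rw [hP_def, ← Real.finset_prod_rpow e _ (fun i _ => (hu_pos i).le) _,
        ← Finset.prod_div_distrib]
      refine Finset.prod_congr rfl fun i _ => ?_
      rw [Real.div_rpow (hg_nonneg i) (hu_pos i).le]
    have hgprod : ∏ i ∈ e, (g i) ^ ((r : ℝ))⁻¹ = x c * z ^ (r - 1) := by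
      rw [← Finset.mul_prod_erase e _ hc]
      have h1 : (g c) ^ ((r : ℝ))⁻¹ = x c := by
        simp only [hg_def, if_pos rfl]
        rw [← Real.rpow_natCast (x c) r, ← Real.rpow_mul (hx c),
          mul_inv_cancel₀ (ne_of_gt hr0), Real.rpow_one]
      have h2 : ∏ i ∈ e.erase c, (g i) ^ ((r : ℝ))⁻¹ = z ^ (r - 1) := by
        have hz' : ∀ i ∈ e.erase c, (g i) ^ ((r : ℝ))⁻¹ = z := by
          intro i hi
          have : i ≠ c := Finset.ne_of_mem_erase hi
          simp only [hg_def, if_neg this]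
          rw [← Real.rpow_natCast z r, ← Real.rpow_mul hz.le,
            mul_inv_cancel₀ (ne_of_gt hr0), Real.rpow_one]
        rw [Finset.prod_congr rfl hz', Finset.prod_const, Finset.card_erase_of_mem hc, he]
      rw [h1, h2]
    have := mul_le_mul_of_nonneg_left amgm hP_pos.le
    calc x c * z ^ (r - 1) = ∏ i ∈ e, (g i) ^ ((r : ℝ))⁻¹ := hgprod.symm
      _ = P * ((∏ i ∈ e, (g i) ^ ((r : ℝ))⁻¹) / P) := by
          rw [mul_div_cancel₀ _ hP_pos.ne']
      _ = P * ∏ i ∈ e, (g i / u i) ^ ((r : ℝ))⁻¹ := by rw [hprod_split]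
      _ ≤ P * ∑ i ∈ e, (r : ℝ)⁻¹ * (g i / u i) := this
  -- sum over c
  have total : ∑ c ∈ e, ∑ i ∈ e, (r : ℝ)⁻¹ * ((if i = c then x c ^ r else z ^ r) / u i) = 1 := by
    rw [Finset.sum_comm]
    have inner : ∀ i ∈ e, ∑ c ∈ e, (r : ℝ)⁻¹ * ((if i = c then x c ^ r else z ^ r) / u i) = (r : ℝ)⁻¹ * (u i / u i) := by
      intro i hi
      rw [← Finset.mul_sum, ← Finset.sum_div]
      congr 2
      rw [← Finset.add_sum_erase e _ hi, if_pos rfl]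
      congr 1
      have : ∀ c ∈ e.erase i, (if i = c then x c ^ r else z ^ r) = z ^ r := by
        intro c hcm
        have : c ≠ i := Finset.ne_of_mem_erase hcm
        rw [if_neg (Ne.symm this)]
      rw [Finset.sum_congr rfl this, Finset.sum_const, Finset.card_erase_of_mem hi, he,
        nsmul_eq_mul]
      congr 1
      have : (1:ℕ) ≤ r := by omega
      push_cast [Nat.cast_sub this]
      ring
    rw [Finset.sum_congr rfl inner]
    have : ∀ i ∈ e, (r : ℝ)⁻¹ * (u i / u i) = (r : ℝ)⁻¹ := by
      intro i _
      rw [div_self (ne_of_gt (hu_pos i)), mul_one]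
    rw [Finset.sum_congr rfl this, Finset.sum_const, he, nsmul_eq_mul,
      mul_inv_cancel₀ (ne_of_gt hr0)]
  calc (∑ c ∈ e, x c) * z ^ (r - 1) = ∑ c ∈ e, x c * z ^ (r - 1) := by rw [Finset.sum_mul]
    _ ≤ ∑ c ∈ e, P * ∑ i ∈ e, (r : ℝ)⁻¹ * ((if i = c then x c ^ r else z ^ r) / u i) :=
        Finset.sum_le_sum key
    _ = P * ∑ c ∈ e, ∑ i ∈ e, (r : ℝ)⁻¹ * ((if i = c then x c ^ r else z ^ r) / u i) := by
        rw [Finset.mul_sum]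
    _ = P := by rw [total, mul_one]


lemma form_ge {n r : ℕ} (hn : 0 < n) (hr : 0 < r) (E : Finset (Finset (Fin n)))
    (hE : ∀ e ∈ E, e.card = r) (w : Fin n → ℝ) (hw : ∀ i, 0 ≤ w i) :
    ∑ e ∈ E, (r : ℝ) * ∏ i ∈ e, w i ≤ form (adjT r E) w := by
  classical
  -- canonical enumeration of each edge
  set ι : Finset (Fin n) → (Fin r → Fin n) := fun e =>
    if h : e.card = r then (fun k => e.orderEmbOfFin h k) else fun _ => ⟨0, hn⟩ with hι_def
  have hι_inj : ∀ e ∈ E, Function.Injective (ι e) := by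
    intro e he
    simp only [hι_def, dif_pos (hE e he)]
    exact fun a b hab => (e.orderEmbOfFin (hE e he)).injective hab
  have hι_img : ∀ e ∈ E, Finset.image (ι e) Finset.univ = e := by
    intro e he
    simp only [hι_def, dif_pos (hE e he)]
    ext a
    simp only [Finset.mem_image, Finset.mem_univ, true_and]
    constructor
    · rintro ⟨k, rfl⟩; exact Finset.orderEmbOfFin_mem e (hE e he) k
    · intro ha
      have : a ∈ Set.range (e.orderEmbOfFin (hE e he)) := by
        rw [Finset.range_orderEmbOfFin]; exact ha
      obtain ⟨k, hk⟩ := this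
      exact ⟨k, hk⟩
  -- the injection from pairs (edge, permutation) to tuples
  set Φ : Finset (Fin n) × Equiv.Perm (Fin r) → (Fin r → Fin n) :=
    fun p => ι p.1 ∘ p.2 with hΦ_def
  have hΦ_img : ∀ p ∈ E ×ˢ (Finset.univ : Finset (Equiv.Perm (Fin r))),
      Finset.image (Φ p) Finset.univ = p.1 := by
    rintro ⟨e, σ⟩ hp
    have he : e ∈ E := (Finset.mem_product.1 hp).1
    have : Finset.image (ι e ∘ σ) Finset.univ = Finset.image (ι e) (Finset.image σ Finset.univ) := by
      rw [Finset.image_image]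
    rw [hΦ_def]
    simp only []
    rw [this, Finset.image_univ_equiv, hι_img e he]
  have hΦ_injOn : ∀ p ∈ E ×ˢ (Finset.univ : Finset (Equiv.Perm (Fin r))),
      ∀ q ∈ E ×ˢ (Finset.univ : Finset (Equiv.Perm (Fin r))), Φ p = Φ q → p = q := by
    rintro ⟨e, σ⟩ hp1 ⟨e', σ'⟩ hp2 heq
    have ha : Finset.image (Φ (e, σ)) Finset.univ = e := hΦ_img (e, σ) hp1
    have hb : Finset.image (Φ (e', σ')) Finset.univ = e' := hΦ_img (e', σ') hp2
    have h1 : e = e' := by rw [← ha, ← hb, heq]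
    subst h1
    have he : e ∈ E := (Finset.mem_product.1 hp1).1
    have hσ : σ = σ' := Equiv.ext fun k => hι_inj e he (congrFun heq k)
    rw [hσ]
  have hnonneg : ∀ t : Fin r → Fin n, 0 ≤ adjT r E t * ∏ k, w (t k) :=
    fun t => mul_nonneg (adjT_nonneg r E t) (Finset.prod_nonneg fun k _ => hw _)
  have step1 : ∑ t ∈ (E ×ˢ (Finset.univ : Finset (Equiv.Perm (Fin r)))).image Φ,
      (adjT r E t * ∏ k, w (t k)) ≤ form (adjT r E) w := by
    unfold form
    exact Finset.sum_le_sum_of_subset_of_nonneg (Finset.subset_univ _)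
      (fun t _ _ => hnonneg t)
  have step2 : ∑ t ∈ (E ×ˢ (Finset.univ : Finset (Equiv.Perm (Fin r)))).image Φ,
      (adjT r E t * ∏ k, w (t k))
      = ∑ p ∈ E ×ˢ (Finset.univ : Finset (Equiv.Perm (Fin r))),
        (adjT r E (Φ p) * ∏ k, w (Φ p k)) := Finset.sum_image hΦ_injOn
  have step3 : ∀ e ∈ E, ∀ σ : Equiv.Perm (Fin r),
      adjT r E (Φ (e, σ)) * ∏ k, w (Φ (e, σ) k) = (1 / ((r-1).factorial : ℝ)) * ∏ i ∈ e, w i := by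
    intro e he σ
    have himg : Finset.image (Φ (e, σ)) Finset.univ = e := hΦ_img (e, σ) (by
      exact Finset.mem_product.2 ⟨he, Finset.mem_univ _⟩)
    have hT : adjT r E (Φ (e, σ)) = 1 / ((r-1).factorial : ℝ) := by
      unfold adjT
      rw [himg, if_pos he]
    have hprod : ∏ k, w (Φ (e, σ) k) = ∏ i ∈ e, w i := by
      have h1 : ∏ k, w (Φ (e, σ) k) = ∏ k, w (ι e k) := by
        have := Equiv.prod_comp σ (fun k => w (ι e k))
        simpa [hΦ_def, Function.comp] using this
      have h2 : ∏ i ∈ e, w i = ∏ k, w (ι e k) := by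
        conv_lhs => rw [← hι_img e he]
        exact Finset.prod_image (fun a _ b _ hab => hι_inj e he hab)
      rw [h1, h2]
    rw [hT, hprod]
  have step4 : ∑ p ∈ E ×ˢ (Finset.univ : Finset (Equiv.Perm (Fin r))),
      (adjT r E (Φ p) * ∏ k, w (Φ p k))
      = ∑ e ∈ E, (r : ℝ) * ∏ i ∈ e, w i := by
    rw [Finset.sum_product]
    refine Finset.sum_congr rfl fun e he => ?_
    rw [Finset.sum_congr rfl (fun σ _ => step3 e he σ), Finset.sum_const,
      Finset.card_univ, Fintype.card_perm, Fintype.card_fin, nsmul_eq_mul]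
    have hfact : (r.factorial : ℝ) = (r : ℝ) * ((r-1).factorial : ℝ) := by
      rw [← Nat.mul_factorial_pred hr.ne']
      push_cast
      ring
    have hfpos : (0:ℝ) < ((r-1).factorial : ℝ) := by
      exact_mod_cast Nat.factorial_pos _
    rw [hfact]
    field_simp
  calc ∑ e ∈ E, (r : ℝ) * ∏ i ∈ e, w i
      = ∑ p ∈ E ×ˢ (Finset.univ : Finset (Equiv.Perm (Fin r))),
        (adjT r E (Φ p) * ∏ k, w (Φ p k)) := step4.symm
    _ = ∑ t ∈ (E ×ˢ (Finset.univ : Finset (Equiv.Perm (Fin r)))).image Φ,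
        (adjT r E t * ∏ k, w (t k)) := step2.symm
    _ ≤ form (adjT r E) w := step1


theorem stmt_15 (n r : ℕ) (hn : 0 < n) (hr : 3 ≤ r)
    (E : Finset (Finset (Fin n))) (hE : ∀ e ∈ E, e.card = r) :
    ((1 / (n : ℝ)) * ∑ i, (hDeg E i : ℝ) ^ ((r : ℝ) / ((r : ℝ) - 1)))
        ^ (((r : ℝ) - 1) / (r : ℝ)) ≤ specRad (adjT r E) := by
  classical
  have hrpos : 0 < r := by omega
  have hr0 : (0:ℝ) < r := by exact_mod_cast hrpos
  have hr1 : (0:ℝ) < (r:ℝ) - 1 := by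
    have : (1:ℝ) < r := by exact_mod_cast (by omega : 1 < r)
    linarith
  have hn0 : (0:ℝ) < n := by exact_mod_cast hn
  set q : ℝ := (r:ℝ)/((r:ℝ)-1) with hq_def
  set θ : ℝ := ((r:ℝ)-1)/(r:ℝ) with hθ_def
  have hθpos : 0 < θ := div_pos hr1 hr0
  set S' : ℝ := ∑ i, (hDeg E i : ℝ) ^ q with hS'_def
  have hS'nonneg : 0 ≤ S' :=
    Finset.sum_nonneg fun i _ => Real.rpow_nonneg (Nat.cast_nonneg _) q
  have bdd := bdd_specRad (V := Fin n) (r := r) (by omega) E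
  rcases eq_or_lt_of_le hS'nonneg with hS0 | hS
  · -- degenerate case: S' = 0
    rw [← hS0, mul_zero, Real.zero_rpow (ne_of_gt hθpos)]
    set x₀ : Fin n → ℝ := fun i => if i = ⟨0, hn⟩ then 1 else 0 with hx₀_def
    have hx₀ : ∀ i, 0 ≤ x₀ i := fun i => by
      simp only [hx₀_def]; split <;> norm_num
    have hx₀s : ∑ i, x₀ i ^ r = 1 := by
      have : ∀ i, x₀ i ^ r = if i = ⟨0, hn⟩ then 1 else 0 := by
        intro i
        simp only [hx₀_def]
        split
        · exact one_pow r
        · exact zero_pow (by omega)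
      rw [Finset.sum_congr rfl (fun i _ => this i), Finset.sum_ite_eq' Finset.univ _ (fun _ => (1:ℝ))]
      simp
    have hmem : form (adjT r E) x₀ ∈
        {p : ℝ | ∃ x : Fin n → ℝ, (∀ i, 0 ≤ x i) ∧ (∑ i, x i ^ r = 1) ∧ p = form (adjT r E) x} :=
      ⟨x₀, hx₀, hx₀s, rfl⟩
    exact le_trans (form_nonneg E x₀ hx₀) (le_csSup bdd hmem)
  · -- main case
    set X : Fin n → ℝ := fun i => (hDeg E i : ℝ) ^ (((r:ℝ)-1)⁻¹) with hX_def
    set x : Fin n → ℝ := fun i => X i / S' ^ ((r:ℝ))⁻¹ with hx_def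
    set z : ℝ := ((n:ℝ)⁻¹) ^ ((r:ℝ))⁻¹ with hz_def
    have hX : ∀ i, 0 ≤ X i := fun i => Real.rpow_nonneg (Nat.cast_nonneg _) _
    have hSpow_pos : 0 < S' ^ ((r:ℝ))⁻¹ := Real.rpow_pos_of_pos hS _
    have hx : ∀ i, 0 ≤ x i := fun i => div_nonneg (hX i) hSpow_pos.le
    have hz : 0 < z := Real.rpow_pos_of_pos (inv_pos.2 hn0) _
    have hzr : z ^ r = (n:ℝ)⁻¹ := by
      rw [hz_def, ← Real.rpow_natCast (((n:ℝ)⁻¹) ^ ((r:ℝ))⁻¹) r, ← Real.rpow_mul (by positivity),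
        inv_mul_cancel₀ (ne_of_gt hr0), Real.rpow_one]
    have hxr : ∀ i, x i ^ r = (hDeg E i : ℝ) ^ q / S' := by
      intro i
      rw [hx_def]
      simp only []
      rw [div_pow]
      congr 1
      · rw [hX_def]
        simp only []
        rw [← Real.rpow_natCast ((hDeg E i : ℝ) ^ (((r:ℝ)-1)⁻¹)) r,
          ← Real.rpow_mul (Nat.cast_nonneg _), hq_def]
        congr 1
        field_simp
      · rw [← Real.rpow_natCast (S' ^ ((r:ℝ))⁻¹) r, ← Real.rpow_mul hS'nonneg,
          inv_mul_cancel₀ (ne_of_gt hr0), Real.rpow_one]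
    have hsumx : ∑ i, x i ^ r = 1 := by
      rw [Finset.sum_congr rfl (fun i _ => hxr i), ← Finset.sum_div, ← hS'_def,
        div_self (ne_of_gt hS)]
    set w : Fin n → ℝ := fun i => ((x i ^ r + ((r:ℝ)-1) * z ^ r) / r) ^ ((r:ℝ))⁻¹ with hw_def
    have hw : ∀ i, 0 ≤ w i := fun i => Real.rpow_nonneg (by positivity) _
    have hwr : ∀ i, w i ^ r = (x i ^ r + ((r:ℝ)-1) * z ^ r) / r := by
      intro i
      rw [hw_def]
      simp only []
      rw [← Real.rpow_natCast (((x i ^ r + ((r:ℝ)-1) * z ^ r) / r) ^ ((r:ℝ))⁻¹) r,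
        ← Real.rpow_mul (by positivity), inv_mul_cancel₀ (ne_of_gt hr0), Real.rpow_one]
    have hsumw : ∑ i, w i ^ r = 1 := by
      rw [Finset.sum_congr rfl (fun i _ => hwr i), ← Finset.sum_div, Finset.sum_add_distrib,
        hsumx, Finset.sum_const, Finset.card_univ, Fintype.card_fin, nsmul_eq_mul, hzr]
      field_simp
      ring
    -- membership
    have hmem : form (adjT r E) w ∈
        {p : ℝ | ∃ y : Fin n → ℝ, (∀ i, 0 ≤ y i) ∧ (∑ i, y i ^ r = 1) ∧ p = form (adjT r E) y} :=
      ⟨w, hw, hsumw, rfl⟩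
    have hspec : form (adjT r E) w ≤ specRad (adjT r E) := le_csSup bdd hmem
    -- the chain
    have hchain : ((1 / (n : ℝ)) * S') ^ θ ≤ form (adjT r E) w := by
      have hA : ∑ e ∈ E, (r : ℝ) * ∏ i ∈ e, w i ≤ form (adjT r E) w :=
        form_ge hn hrpos E hE w hw
      have hB : ∀ e ∈ E, (∑ c ∈ e, x c) * z ^ (r - 1) ≤ (r : ℝ) * ∏ i ∈ e, w i := by
        intro e he
        have := edge_bound (by omega : 2 ≤ r) e (hE e he) x hx z hz
        rw [hw_def]
        exact this
      have hBsum : ∑ e ∈ E, (∑ c ∈ e, x c) * z ^ (r - 1) ≤ ∑ e ∈ E, (r : ℝ) * ∏ i ∈ e, w i :=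
        Finset.sum_le_sum hB
      have hC : ∑ e ∈ E, (∑ c ∈ e, x c) = ∑ i, (hDeg E i : ℝ) * x i := by
        calc ∑ e ∈ E, (∑ c ∈ e, x c)
            = ∑ e ∈ E, ∑ c, (if c ∈ e then x c else 0) := by
              refine Finset.sum_congr rfl fun e _ => ?_
              rw [Finset.sum_ite_mem, Finset.univ_inter]
          _ = ∑ c, ∑ e ∈ E, (if c ∈ e then x c else 0) := Finset.sum_comm
          _ = ∑ i, (hDeg E i : ℝ) * x i := by
              refine Finset.sum_congr rfl fun c _ => ?_
              rw [Finset.sum_ite, Finset.sum_const, Finset.sum_const_zero, add_zero,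
                nsmul_eq_mul]
              rfl
      have hD : ∑ i, (hDeg E i : ℝ) * x i = S' ^ (1 - (r:ℝ)⁻¹) := by
        have hper : ∀ i, (hDeg E i : ℝ) * X i = (hDeg E i : ℝ) ^ q := by
          intro i
          rcases Nat.eq_zero_or_pos (hDeg E i) with h0 | hpos
          · rw [h0]
            simp only [Nat.cast_zero, zero_mul]
            rw [Real.zero_rpow (by positivity : q ≠ 0)]
          · have hd0 : (0:ℝ) < (hDeg E i : ℝ) := by exact_mod_cast hpos
            rw [hX_def]
            simp only []
            nth_rewrite 1 [← Real.rpow_one ((hDeg E i : ℝ))]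
            rw [← Real.rpow_add hd0, hq_def]
            congr 1
            field_simp
            ring
        calc ∑ i, (hDeg E i : ℝ) * x i
            = (∑ i, (hDeg E i : ℝ) * X i) / S' ^ ((r:ℝ))⁻¹ := by
              rw [Finset.sum_div]
              refine Finset.sum_congr rfl fun i _ => ?_
              rw [hx_def]
              simp only []
              ring
          _ = S' / S' ^ ((r:ℝ))⁻¹ := by
              rw [Finset.sum_congr rfl (fun i _ => hper i), ← hS'_def]
          _ = S' ^ (1 - (r:ℝ)⁻¹) := by
              rw [Real.rpow_sub hS, Real.rpow_one]
      have hEz : z ^ (r - 1) = ((n:ℝ)⁻¹) ^ θ := by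
        rw [hz_def, ← Real.rpow_natCast (((n:ℝ)⁻¹) ^ ((r:ℝ))⁻¹) (r-1),
          ← Real.rpow_mul (by positivity)]
        congr 1
        rw [Nat.cast_sub (by omega : 1 ≤ r), Nat.cast_one, hθ_def]
        field_simp
      have hfinal : ((1 / (n : ℝ)) * S') ^ θ = (∑ i, (hDeg E i : ℝ) * x i) * z ^ (r - 1) := by
        rw [hD, hEz, Real.mul_rpow (by positivity) hS'nonneg, one_div]
        have : (1 : ℝ) - (r:ℝ)⁻¹ = θ := by
          rw [hθ_def]; field_simp
        rw [this, mul_comm]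
      calc ((1 / (n : ℝ)) * S') ^ θ
          = (∑ i, (hDeg E i : ℝ) * x i) * z ^ (r - 1) := hfinal
        _ = (∑ e ∈ E, (∑ c ∈ e, x c)) * z ^ (r - 1) := by rw [hC]
        _ = ∑ e ∈ E, (∑ c ∈ e, x c) * z ^ (r - 1) := Finset.sum_mul _ _ _
        _ ≤ ∑ e ∈ E, (r : ℝ) * ∏ i ∈ e, w i := hBsum
        _ ≤ form (adjT r E) w := hA
    exact le_trans hchain hspec
end

section
/- Let H be a connected r-uniform hypergraph on n vertices (r ≥ 3). Then ρ(H) = ((1/n) ∑_{i=1}^n d_i^{r/(r-1)})^{(r-1)/r} if and only if H is regular (all degrees equal). -/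
/-- Two vertices are adjacent in a hypergraph if some edge contains both. -/
def hAdj {V : Type*} (E : Finset (Finset V)) (i j : V) : Prop :=
  ∃ e ∈ E, i ∈ e ∧ j ∈ e

/-- A hypergraph is connected if any two vertices are joined by a walk. -/
def hConn {V : Type*} (E : Finset (Finset V)) : Prop :=
  ∀ i j : V, Relation.ReflTransGen (hAdj E) i j

section Helpers

open Finset Real

variable {V : Type*} [DecidableEq V]

/-- Weighted AM-GM with uniform weights `1/r` over a finset of card `r`. -/
lemma amgm_weak {r : ℕ} (hr : 0 < r) (e : Finset V) (hcard : e.card = r)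
    (z : V → ℝ) (hz : ∀ v ∈ e, 0 ≤ z v) :
    ∏ v ∈ e, z v ^ ((r : ℝ)⁻¹) ≤ (r : ℝ)⁻¹ * ∑ v ∈ e, z v := by
  have hrR : (0:ℝ) < r := by exact_mod_cast hr
  by_cases h0 : ∃ v ∈ e, z v = 0
  · obtain ⟨v, hv, hzv⟩ := h0
    have : ∏ v ∈ e, z v ^ ((r : ℝ)⁻¹) = 0 := by
      apply Finset.prod_eq_zero hv
      rw [hzv]; exact Real.zero_rpow (by positivity)
    rw [this]
    have : (0:ℝ) ≤ ∑ v ∈ e, z v := Finset.sum_nonneg hz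
    positivity
  · push_neg at h0
    have hpos : ∀ v ∈ e, 0 < z v := fun v hv => lt_of_le_of_ne (hz v hv) (Ne.symm (h0 v hv))
    set A : ℝ := (r : ℝ)⁻¹ * ∑ v ∈ e, z v with hA
    have hApos : 0 < A := by
      apply mul_pos (by positivity)
      apply Finset.sum_pos hpos ⟨(Finset.card_pos.mp (hcard ▸ hr)).choose,
        (Finset.card_pos.mp (hcard ▸ hr)).choose_spec⟩
    have key : ∀ v ∈ e, z v ^ ((r : ℝ)⁻¹) ≤ Real.exp ((r:ℝ)⁻¹ * (z v / A - 1)) * A ^ ((r : ℝ)⁻¹) := by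
      intro v hv
      have h1 : Real.log (z v / A) ≤ z v / A - 1 :=
        Real.log_le_sub_one_of_pos (div_pos (hpos v hv) hApos)
      have h2 : z v ^ ((r : ℝ)⁻¹) = Real.exp ((r:ℝ)⁻¹ * Real.log (z v)) := by
        rw [Real.rpow_def_of_pos (hpos v hv), mul_comm]
      rw [h2]
      have h3 : A ^ ((r : ℝ)⁻¹) = Real.exp ((r:ℝ)⁻¹ * Real.log A) := by
        rw [Real.rpow_def_of_pos hApos, mul_comm]
      rw [h3, ← Real.exp_add]
      apply Real.exp_le_exp.mpr
      have : Real.log (z v) = Real.log (z v / A) + Real.log A := by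
        rw [← Real.log_mul (ne_of_gt (div_pos (hpos v hv) hApos)) (ne_of_gt hApos), div_mul_cancel₀]
        exact ne_of_gt hApos
      rw [this]; nlinarith [h1, inv_pos.mpr hrR]
    calc ∏ v ∈ e, z v ^ ((r : ℝ)⁻¹)
        ≤ ∏ v ∈ e, Real.exp ((r:ℝ)⁻¹ * (z v / A - 1)) * A ^ ((r : ℝ)⁻¹) := by
          apply Finset.prod_le_prod (fun v hv => Real.rpow_nonneg (hz v hv) _) key
      _ = Real.exp (∑ v ∈ e, (r:ℝ)⁻¹ * (z v / A - 1)) * (A ^ ((r : ℝ)⁻¹))^(r:ℕ) := by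
          rw [Finset.prod_mul_distrib, Real.exp_sum, Finset.prod_const, hcard]
      _ = A := by
          have hsum : ∑ v ∈ e, (r:ℝ)⁻¹ * (z v / A - 1) = 0 := by
            rw [← Finset.mul_sum, Finset.sum_sub_distrib, Finset.sum_const, hcard]
            rw [← Finset.sum_div]
            have hS : ∑ v ∈ e, z v = r * A := by
              rw [hA]; field_simp
            rw [hS, mul_div_assoc, div_self (ne_of_gt hApos)]; simp
          rw [hsum, Real.exp_zero, one_mul, ← Real.rpow_natCast (A ^ ((r : ℝ)⁻¹)) r,
            ← Real.rpow_mul (le_of_lt hApos), inv_mul_cancel₀ (ne_of_gt hrR), Real.rpow_one]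


lemma amgm_strict {r : ℕ} (hr : 0 < r) (e : Finset V) (hcard : e.card = r)
    (z : V → ℝ) (hz : ∀ v ∈ e, 0 ≤ z v)
    (hne : ∃ v ∈ e, ∃ w ∈ e, z v ≠ z w) :
    ∏ v ∈ e, z v ^ ((r : ℝ)⁻¹) < (r : ℝ)⁻¹ * ∑ v ∈ e, z v := by
  have hrR : (0:ℝ) < r := by exact_mod_cast hr
  obtain ⟨v1, hv1, w1, hw1, hne1⟩ := hne
  by_cases h0 : ∃ v ∈ e, z v = 0
  · obtain ⟨v, hv, hzv⟩ := h0
    have hprod : ∏ v ∈ e, z v ^ ((r : ℝ)⁻¹) = 0 := by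
      apply Finset.prod_eq_zero hv
      rw [hzv]; exact Real.zero_rpow (by positivity)
    rw [hprod]
    apply mul_pos (by positivity)
    have : ∃ u ∈ e, 0 < z u := by
      rcases eq_or_ne (z v1) 0 with h | h
      · exact ⟨w1, hw1, lt_of_le_of_ne (hz w1 hw1) (by rw [h] at hne1; exact fun hc => hne1 hc)⟩
      · exact ⟨v1, hv1, lt_of_le_of_ne (hz v1 hv1) (Ne.symm h)⟩
    obtain ⟨u, hu, hzu⟩ := this
    exact Finset.sum_pos' hz ⟨u, hu, hzu⟩
  · push_neg at h0
    have hpos : ∀ v ∈ e, 0 < z v := fun v hv => lt_of_le_of_ne (hz v hv) (Ne.symm (h0 v hv))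
    set A : ℝ := (r : ℝ)⁻¹ * ∑ v ∈ e, z v with hA
    have hApos : 0 < A :=
      mul_pos (by positivity) (Finset.sum_pos hpos ⟨v1, hv1⟩)
    have hS : ∑ v ∈ e, z v = r * A := by rw [hA]; field_simp
    -- some element differs from A
    have hv0 : ∃ v0 ∈ e, z v0 ≠ A := by
      by_contra hcon
      push_neg at hcon
      exact hne1 ((hcon v1 hv1).trans (hcon w1 hw1).symm)
    obtain ⟨v0, hv0e, hzv0⟩ := hv0
    have hlogle : ∀ v ∈ e, (r:ℝ)⁻¹ * Real.log (z v) ≤ (r:ℝ)⁻¹ * (Real.log A + (z v / A - 1)) := by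
      intro v hv
      have h1 : Real.log (z v / A) ≤ z v / A - 1 :=
        Real.log_le_sub_one_of_pos (div_pos (hpos v hv) hApos)
      have h2 : Real.log (z v) = Real.log (z v / A) + Real.log A := by
        rw [← Real.log_mul (ne_of_gt (div_pos (hpos v hv) hApos)) (ne_of_gt hApos),
          div_mul_cancel₀]
        exact ne_of_gt hApos
      rw [h2]
      have := inv_pos.mpr hrR
      nlinarith
    have hloglt : (r:ℝ)⁻¹ * Real.log (z v0) < (r:ℝ)⁻¹ * (Real.log A + (z v0 / A - 1)) := by
      have h1 : Real.log (z v0 / A) < z v0 / A - 1 := by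
        apply Real.log_lt_sub_one_of_pos (div_pos (hpos v0 hv0e) hApos)
        exact fun hc => hzv0 (by field_simp at hc; linarith)
      have h2 : Real.log (z v0) = Real.log (z v0 / A) + Real.log A := by
        rw [← Real.log_mul (ne_of_gt (div_pos (hpos v0 hv0e) hApos)) (ne_of_gt hApos),
          div_mul_cancel₀]
        exact ne_of_gt hApos
      rw [h2]
      have := inv_pos.mpr hrR
      nlinarith
    have hsumlt : ∑ v ∈ e, (r:ℝ)⁻¹ * Real.log (z v)
        < ∑ v ∈ e, (r:ℝ)⁻¹ * (Real.log A + (z v / A - 1)) :=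
      Finset.sum_lt_sum (fun v hv => hlogle v hv) ⟨v0, hv0e, hloglt⟩
    have hsumr : ∑ v ∈ e, (r:ℝ)⁻¹ * (Real.log A + (z v / A - 1)) = Real.log A := by
      rw [← Finset.mul_sum]
      have : ∑ v ∈ e, (Real.log A + (z v / A - 1))
          = r * Real.log A + ((∑ v ∈ e, z v) / A - r) := by
        rw [Finset.sum_add_distrib, Finset.sum_const, hcard, Finset.sum_sub_distrib,
          Finset.sum_const, hcard, ← Finset.sum_div]
        push_cast; ring
      rw [this, hS, mul_div_assoc, div_self (ne_of_gt hApos)]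
      field_simp
      ring
    have hgm : ∏ v ∈ e, z v ^ ((r : ℝ)⁻¹) = Real.exp (∑ v ∈ e, (r:ℝ)⁻¹ * Real.log (z v)) := by
      rw [Real.exp_sum]
      apply Finset.prod_congr rfl
      intro v hv
      rw [Real.rpow_def_of_pos (hpos v hv), mul_comm]
    rw [hgm]
    calc Real.exp (∑ v ∈ e, (r:ℝ)⁻¹ * Real.log (z v))
        < Real.exp (Real.log A) := by
          apply Real.exp_lt_exp.mpr; rw [← hsumr]; exact hsumlt
      _ = A := Real.exp_log hApos


private lemma hr0 {r : ℕ} (hr : 3 ≤ r) : 0 < r := by omega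

private lemma Zpos {r : ℕ} (e : Finset V) (a : V → ℝ) (hr : 3 ≤ r) (ha : ∀ v ∈ e, 0 ≤ a v) :
    ∀ v ∈ e, 0 < (r:ℝ) - 1 + a v ^ r := by
  intro v hv
  have h1 : (3:ℝ) ≤ r := by exact_mod_cast hr
  have h2 : (0:ℝ) ≤ a v ^ r := pow_nonneg (ha v hv) r
  linarith

/-- Main pointwise inequality: `∑ a_v ≤ ∏ (r-1+a_v^r)^(1/r)` over an `r`-set. -/
lemma claimP_weak {r : ℕ} (hr : 3 ≤ r) (e : Finset V) (hcard : e.card = r) (a : V → ℝ)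
    (ha : ∀ v ∈ e, 0 ≤ a v) :
    ∑ v ∈ e, a v ≤ ∏ v ∈ e, ((r:ℝ) - 1 + a v ^ r) ^ ((r:ℝ)⁻¹) := by
  have hrpos := hr0 hr
  have hrR : (0:ℝ) < r := by exact_mod_cast hrpos
  set Z : V → ℝ := fun v => (r:ℝ) - 1 + a v ^ r with hZ
  have hZpos : ∀ v ∈ e, 0 < Z v := Zpos e a hr ha
  set P : ℝ := ∏ v ∈ e, Z v ^ ((r:ℝ)⁻¹) with hP
  have hPpos : 0 < P :=
    Finset.prod_pos fun v hv => Real.rpow_pos_of_pos (hZpos v hv) _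
  -- per k in e : a k / P ≤ r⁻¹ * ∑_v z_k v
  have hgm : ∀ k ∈ e, a k / P = ∏ v ∈ e, ((if v = k then a v ^ r else 1) / Z v) ^ ((r:ℝ)⁻¹) := by
    intro k hk
    have hnum : ∀ v ∈ e, (0:ℝ) ≤ (if v = k then a v ^ r else 1) := by
      intro v hv; split
      · exact pow_nonneg (ha v hv) r
      · norm_num
    have : ∀ v ∈ e, ((if v = k then a v ^ r else 1) / Z v) ^ ((r:ℝ)⁻¹)
        = (if v = k then a v ^ r else 1) ^ ((r:ℝ)⁻¹) / Z v ^ ((r:ℝ)⁻¹) := by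
      intro v hv
      exact Real.div_rpow (hnum v hv) (le_of_lt (hZpos v hv)) _
    rw [Finset.prod_congr rfl this, Finset.prod_div_distrib, ← hP]
    congr 1
    rw [Finset.prod_eq_single_of_mem k hk (fun v _ hvk => by rw [if_neg hvk, Real.one_rpow]),
      if_pos rfl, ← Real.rpow_natCast (a k) r, ← Real.rpow_mul (ha k hk),
      mul_inv_cancel₀ (ne_of_gt hrR), Real.rpow_one]
  have hsum_fiber : ∀ v ∈ e, ∑ k ∈ e, ((if v = k then a v ^ r else 1) / Z v) = 1 := by
    intro v hv
    rw [← Finset.sum_div]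
    have : ∑ k ∈ e, (if v = k then a v ^ r else 1)
        = ∑ k ∈ e, ((if v = k then (a v ^ r - 1) else 0) + 1) := by
      apply Finset.sum_congr rfl; intro k _; split <;> ring
    rw [this, Finset.sum_add_distrib, Finset.sum_const, hcard, Finset.sum_ite_eq e v,
      if_pos hv]
    have : a v ^ r - 1 + (r : ℕ) • (1:ℝ) = Z v := by
      simp [hZ]; ring
    rw [this, div_self (ne_of_gt (hZpos v hv))]
  have hmain : ∑ k ∈ e, a k / P ≤ 1 := by
    have step : ∀ k ∈ e, a k / P ≤ (r:ℝ)⁻¹ * ∑ v ∈ e, ((if v = k then a v ^ r else 1) / Z v) := by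
      intro k hk
      rw [hgm k hk]
      apply amgm_weak hrpos e hcard
      intro v hv
      have := hZpos v hv
      have : (0:ℝ) ≤ (if v = k then a v ^ r else 1) := by
        split
        · exact pow_nonneg (ha v hv) r
        · norm_num
      positivity
    calc ∑ k ∈ e, a k / P
        ≤ ∑ k ∈ e, (r:ℝ)⁻¹ * ∑ v ∈ e, ((if v = k then a v ^ r else 1) / Z v) :=
          Finset.sum_le_sum step
      _ = (r:ℝ)⁻¹ * ∑ v ∈ e, ∑ k ∈ e, ((if v = k then a v ^ r else 1) / Z v) := by
          rw [← Finset.mul_sum, Finset.sum_comm]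
      _ = 1 := by
          rw [Finset.sum_congr rfl hsum_fiber, Finset.sum_const, hcard]
          field_simp
          simp
  rw [← Finset.sum_div] at hmain
  calc ∑ v ∈ e, a v ≤ P := by
        exact (div_le_one hPpos).mp hmain
    _ = _ := rfl


lemma claimP_strict {r : ℕ} (hr : 3 ≤ r) (e : Finset V) (hcard : e.card = r) (a : V → ℝ)
    (ha : ∀ v ∈ e, 0 ≤ a v) (hne : ∃ v0 ∈ e, a v0 ≠ 1) :
    ∑ v ∈ e, a v < ∏ v ∈ e, ((r:ℝ) - 1 + a v ^ r) ^ ((r:ℝ)⁻¹) := by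
  have hrpos := hr0 hr
  have hrR : (0:ℝ) < r := by exact_mod_cast hrpos
  set Z : V → ℝ := fun v => (r:ℝ) - 1 + a v ^ r with hZ
  have hZpos : ∀ v ∈ e, 0 < Z v := Zpos e a hr ha
  set P : ℝ := ∏ v ∈ e, Z v ^ ((r:ℝ)⁻¹) with hP
  have hPpos : 0 < P :=
    Finset.prod_pos fun v hv => Real.rpow_pos_of_pos (hZpos v hv) _
  have hnum : ∀ k : V, ∀ v ∈ e, (0:ℝ) ≤ (if v = k then a v ^ r else 1) := by
    intro k v hv; split
    · exact pow_nonneg (ha v hv) r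
    · norm_num
  have hgm : ∀ k ∈ e, a k / P = ∏ v ∈ e, ((if v = k then a v ^ r else 1) / Z v) ^ ((r:ℝ)⁻¹) := by
    intro k hk
    have : ∀ v ∈ e, ((if v = k then a v ^ r else 1) / Z v) ^ ((r:ℝ)⁻¹)
        = (if v = k then a v ^ r else 1) ^ ((r:ℝ)⁻¹) / Z v ^ ((r:ℝ)⁻¹) := by
      intro v hv
      exact Real.div_rpow (hnum k v hv) (le_of_lt (hZpos v hv)) _
    rw [Finset.prod_congr rfl this, Finset.prod_div_distrib, ← hP]
    congr 1
    rw [Finset.prod_eq_single_of_mem k hk (fun v _ hvk => by rw [if_neg hvk, Real.one_rpow]),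
      if_pos rfl, ← Real.rpow_natCast (a k) r, ← Real.rpow_mul (ha k hk),
      mul_inv_cancel₀ (ne_of_gt hrR), Real.rpow_one]
  have hsum_fiber : ∀ v ∈ e, ∑ k ∈ e, ((if v = k then a v ^ r else 1) / Z v) = 1 := by
    intro v hv
    rw [← Finset.sum_div]
    have : ∑ k ∈ e, (if v = k then a v ^ r else 1)
        = ∑ k ∈ e, ((if v = k then (a v ^ r - 1) else 0) + 1) := by
      apply Finset.sum_congr rfl; intro k _; split <;> ring
    rw [this, Finset.sum_add_distrib, Finset.sum_const, hcard, Finset.sum_ite_eq e v,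
      if_pos hv]
    have : a v ^ r - 1 + (r : ℕ) • (1:ℝ) = Z v := by
      simp [hZ]; ring
    rw [this, div_self (ne_of_gt (hZpos v hv))]
  have step : ∀ k ∈ e, a k / P ≤ (r:ℝ)⁻¹ * ∑ v ∈ e, ((if v = k then a v ^ r else 1) / Z v) := by
    intro k hk
    rw [hgm k hk]
    apply amgm_weak hrpos e hcard
    intro v hv
    have h1 := hZpos v hv
    have h2 := hnum k v hv
    positivity
  -- find k* with a non-constant fiber
  have hstrict : ∃ k ∈ e, a k / P < (r:ℝ)⁻¹ * ∑ v ∈ e, ((if v = k then a v ^ r else 1) / Z v) := by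
    by_cases hcase : ∃ v ∈ e, ∃ w ∈ e, Z v ≠ Z w
    · obtain ⟨v, hv, w, hw, hZne⟩ := hcase
      have hk : ∃ k, k ∈ (e.erase v).erase w := by
        rw [← Finset.Nonempty, Finset.nonempty_iff_ne_empty]
        intro hemp
        have hsub : e ⊆ insert v (insert w (∅ : Finset V)) := by
          intro x hx
          rcases eq_or_ne x v with h | h
          · simp [h]
          rcases eq_or_ne x w with h' | h'
          · simp [h']
          exfalso
          have : x ∈ (e.erase v).erase w := by
            rw [Finset.mem_erase, Finset.mem_erase]
            exact ⟨h', h, hx⟩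
          rw [hemp] at this
          exact absurd this (Finset.notMem_empty x)
        have := Finset.card_le_card hsub
        have h2 : (insert v (insert w (∅ : Finset V))).card ≤ 2 := by
          apply le_trans (Finset.card_insert_le _ _)
          have := Finset.card_insert_le w (∅ : Finset V)
          simp at this ⊢
        omega
      obtain ⟨k, hk⟩ := hk
      have hkw : k ≠ w := (Finset.mem_erase.mp hk).1
      have hkv : k ≠ v := (Finset.mem_erase.mp (Finset.mem_erase.mp hk).2).1
      have hke : k ∈ e := Finset.mem_of_mem_erase (Finset.mem_of_mem_erase hk)
      refine ⟨k, hke, ?_⟩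
      rw [hgm k hke]
      apply amgm_strict hrpos e hcard
      · intro u hu
        have h1 := hZpos u hu
        have h2 := hnum k u hu
        positivity
      · refine ⟨v, hv, w, hw, ?_⟩
        rw [if_neg (fun h => hkv h.symm), if_neg (fun h => hkw h.symm)]
        intro hcon
        apply hZne
        have h1 := ne_of_gt (hZpos v hv)
        have h2 := ne_of_gt (hZpos w hw)
        field_simp at hcon
        linarith [hcon]
    · push_neg at hcase
      obtain ⟨v0, hv0, ha0⟩ := hne
      have hw : ∃ w ∈ e, w ≠ v0 := by
        have h1 : 1 < e.card := by omega
        exact Finset.exists_mem_ne h1 v0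
      obtain ⟨w, hw, hwv0⟩ := hw
      refine ⟨v0, hv0, ?_⟩
      rw [hgm v0 hv0]
      apply amgm_strict hrpos e hcard
      · intro u hu
        have h1 := hZpos u hu
        have h2 := hnum v0 u hu
        positivity
      · refine ⟨v0, hv0, w, hw, ?_⟩
        rw [if_pos rfl, if_neg hwv0]
        have hZeq : Z w = Z v0 := hcase w hw v0 hv0
        rw [hZeq]
        intro hcon
        have h1 : a v0 ^ r = 1 := by
          have h2 := ne_of_gt (hZpos v0 hv0)
          field_simp at hcon
          linarith
        apply ha0
        have : ((a v0) ^ r : ℝ) ^ ((r:ℝ)⁻¹) = (1:ℝ) ^ ((r:ℝ)⁻¹) := by rw [h1]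
        rwa [← Real.rpow_natCast (a v0) r, ← Real.rpow_mul (ha v0 hv0),
          mul_inv_cancel₀ (ne_of_gt hrR), Real.rpow_one, Real.one_rpow] at this
  obtain ⟨k0, hk0, hk0lt⟩ := hstrict
  have hmain : ∑ k ∈ e, a k / P < 1 := by
    calc ∑ k ∈ e, a k / P
        < ∑ k ∈ e, (r:ℝ)⁻¹ * ∑ v ∈ e, ((if v = k then a v ^ r else 1) / Z v) :=
          Finset.sum_lt_sum step ⟨k0, hk0, hk0lt⟩
      _ = (r:ℝ)⁻¹ * ∑ v ∈ e, ∑ k ∈ e, ((if v = k then a v ^ r else 1) / Z v) := by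
          rw [← Finset.mul_sum, Finset.sum_comm]
      _ = 1 := by
          rw [Finset.sum_congr rfl hsum_fiber, Finset.sum_const, hcard]
          field_simp
          simp
  rw [← Finset.sum_div] at hmain
  exact (div_lt_one hPpos).mp hmain

lemma edge_vertex_sum {n : ℕ} (E : Finset (Finset (Fin n)))
    (c : Fin n → ℝ) :
    ∑ e ∈ E, ∑ v ∈ e, c v = ∑ i, (hDeg E i : ℝ) * c i := by
  classical
  have h1 : ∀ e ∈ E, ∑ v ∈ e, c v = ∑ i : Fin n, if i ∈ e then c i else 0 := by
    intro e _
    rw [← Finset.sum_filter, Finset.filter_univ_mem]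
  rw [Finset.sum_congr rfl h1, Finset.sum_comm]
  apply Finset.sum_congr rfl
  intro i _
  rw [← Finset.sum_filter, Finset.sum_const, hDeg, nsmul_eq_mul]

lemma prod_le_deg_sum {n r : ℕ} (hr : 3 ≤ r) (E : Finset (Finset (Fin n)))
    (hE : ∀ e ∈ E, e.card = r) (x : Fin n → ℝ) (hx : ∀ i, 0 ≤ x i) :
    (r : ℝ) * ∑ e ∈ E, ∏ v ∈ e, x v ≤ ∑ i, (hDeg E i : ℝ) * x i ^ r := by
  have hr0 : 0 < r := by omega
  have hrR : (0:ℝ) < r := by exact_mod_cast hr0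
  have hedge : ∀ e ∈ E, ∏ v ∈ e, x v ≤ (r:ℝ)⁻¹ * ∑ v ∈ e, x v ^ r := by
    intro e he
    have := amgm_weak hr0 e (hE e he) (fun v => x v ^ r)
      (fun v _ => pow_nonneg (hx v) r)
    calc ∏ v ∈ e, x v = ∏ v ∈ e, (x v ^ r) ^ ((r:ℝ)⁻¹) := by
          apply Finset.prod_congr rfl
          intro v _
          rw [← Real.rpow_natCast (x v) r, ← Real.rpow_mul (hx v),
            mul_inv_cancel₀ (ne_of_gt hrR), Real.rpow_one]
      _ ≤ (r:ℝ)⁻¹ * ∑ v ∈ e, x v ^ r := this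
  calc (r : ℝ) * ∑ e ∈ E, ∏ v ∈ e, x v
      ≤ (r : ℝ) * ∑ e ∈ E, ((r:ℝ)⁻¹ * ∑ v ∈ e, x v ^ r) := by
        apply mul_le_mul_of_nonneg_left (Finset.sum_le_sum hedge) (le_of_lt hrR)
    _ = ∑ e ∈ E, ∑ v ∈ e, x v ^ r := by
        rw [← Finset.mul_sum, ← mul_assoc, mul_inv_cancel₀ (ne_of_gt hrR), one_mul]
    _ = ∑ i, (hDeg E i : ℝ) * x i ^ r := edge_vertex_sum E _

lemma fiber_card {n r : ℕ} (e : Finset (Fin n)) (hcard : e.card = r) :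
    (Finset.univ.filter (fun t : Fin r → Fin n => Finset.image t Finset.univ = e)).card
      = r.factorial := by
  classical
  have hmem : ∀ t : Fin r → Fin n,
      t ∈ Finset.univ.filter (fun t : Fin r → Fin n => Finset.image t Finset.univ = e)
      → (Finset.image t Finset.univ = e ∧ Function.Injective t) := by
    intro t ht
    rw [Finset.mem_filter] at ht
    refine ⟨ht.2, ?_⟩
    have hc : (Finset.image t Finset.univ).card = (Finset.univ : Finset (Fin r)).card := by
      rw [ht.2, hcard, Finset.card_univ, Fintype.card_fin]
    have := Finset.card_image_iff.mp hc
    intro a b hab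
    exact this (Finset.mem_coe.mpr (Finset.mem_univ a)) (Finset.mem_coe.mpr (Finset.mem_univ b)) hab
  have key : (Finset.univ.filter
        (fun t : Fin r → Fin n => Finset.image t Finset.univ = e)).card
      = (Finset.univ : Finset (Fin r ↪ {v // v ∈ e})).card := by
    apply Finset.card_bij'
      (i := fun t ht => ⟨fun k => ⟨t k, by
        rw [← (hmem t ht).1]
        exact Finset.mem_image_of_mem t (Finset.mem_univ k)⟩, by
        intro a b hab
        exact (hmem t ht).2 (congrArg Subtype.val hab)⟩)
      (j := fun f _ => fun k => (f k : Fin n))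
    case hi => intro t ht; exact Finset.mem_univ _
    case hj =>
      intro f _
      rw [Finset.mem_filter]
      refine ⟨Finset.mem_univ _, ?_⟩
      apply Finset.eq_of_subset_of_card_le
      · intro v hv
        rw [Finset.mem_image] at hv
        obtain ⟨k, _, hk⟩ := hv
        rw [← hk]; exact (f k).2
      · rw [hcard,
          Finset.card_image_of_injective _ (fun a b hab => f.injective (Subtype.ext hab)),
          Finset.card_univ, Fintype.card_fin]
    case left_inv => intro t ht; rfl
    case right_inv =>
      intro f hf
      exact Function.Embedding.ext fun k => Subtype.ext rfl
  rw [key, Finset.card_univ, Fintype.card_embedding_eq, Fintype.card_coe, hcard,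
    Fintype.card_fin, Nat.descFactorial_self]

lemma fiber_sum {n r : ℕ} (e : Finset (Fin n)) (hcard : e.card = r) (x : Fin n → ℝ) :
    ∑ t ∈ Finset.univ.filter (fun t : Fin r → Fin n => Finset.image t Finset.univ = e),
        ∏ k, x (t k)
      = (r.factorial : ℝ) * ∏ v ∈ e, x v := by
  classical
  have hconst : ∀ t ∈ Finset.univ.filter
      (fun t : Fin r → Fin n => Finset.image t Finset.univ = e),
      ∏ k, x (t k) = ∏ v ∈ e, x v := by
    intro t ht
    rw [Finset.mem_filter] at ht
    have himg := ht.2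
    have hc : (Finset.image t Finset.univ).card = (Finset.univ : Finset (Fin r)).card := by
      rw [himg, hcard, Finset.card_univ, Fintype.card_fin]
    have hinj := Finset.card_image_iff.mp hc
    rw [← himg, Finset.prod_image (fun a ha b hb hab => hinj ha hb hab)]
  rw [Finset.sum_congr rfl hconst, Finset.sum_const, fiber_card e hcard, nsmul_eq_mul]

lemma form_adjT {n r : ℕ} (hr : 0 < r) (E : Finset (Finset (Fin n)))
    (hE : ∀ e ∈ E, e.card = r) (x : Fin n → ℝ) :
    form (adjT r E) x = (r : ℝ) * ∑ e ∈ E, ∏ v ∈ e, x v := by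
  classical
  have h1 : form (adjT r E) x
      = ∑ t ∈ Finset.univ.filter
          (fun t : Fin r → Fin n => Finset.image t Finset.univ ∈ E),
          (1 / ((r - 1).factorial : ℝ)) * ∏ k, x (t k) := by
    rw [form, Finset.sum_filter]
    apply Finset.sum_congr rfl
    intro t _
    rw [adjT]
    split <;> simp
  have h2 : ∑ t ∈ Finset.univ.filter
        (fun t : Fin r → Fin n => Finset.image t Finset.univ ∈ E),
        (1 / ((r - 1).factorial : ℝ)) * ∏ k, x (t k)
      = ∑ e ∈ E, ∑ t ∈ (Finset.univ.filter
          (fun t : Fin r → Fin n => Finset.image t Finset.univ ∈ E)).filter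
            (fun t => Finset.image t Finset.univ = e),
          (1 / ((r - 1).factorial : ℝ)) * ∏ k, x (t k) := by
    rw [Finset.sum_fiberwise_of_maps_to]
    intro t ht
    exact (Finset.mem_filter.mp ht).2
  have h3 : ∀ e ∈ E, (Finset.univ.filter
        (fun t : Fin r → Fin n => Finset.image t Finset.univ ∈ E)).filter
          (fun t => Finset.image t Finset.univ = e)
      = Finset.univ.filter (fun t : Fin r → Fin n => Finset.image t Finset.univ = e) := by
    intro e he
    rw [Finset.filter_filter]
    apply Finset.filter_congr
    intro t _
    constructor
    · intro h; exact h.2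
    · intro h; exact ⟨h ▸ he, h⟩
  rw [h1, h2]
  have h4 : ∀ e ∈ E, ∑ t ∈ (Finset.univ.filter
        (fun t : Fin r → Fin n => Finset.image t Finset.univ ∈ E)).filter
          (fun t => Finset.image t Finset.univ = e),
        (1 / ((r - 1).factorial : ℝ)) * ∏ k, x (t k)
      = (r : ℝ) * ∏ v ∈ e, x v := by
    intro e he
    rw [h3 e he, ← Finset.mul_sum, fiber_sum e (hE e he), ← mul_assoc]
    congr 1
    rw [div_mul_eq_mul_div, one_mul, div_eq_iff (by positivity), ← Nat.cast_mul]
    norm_cast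
    exact (Nat.mul_factorial_pred hr.ne').symm
  rw [Finset.sum_congr rfl h4, Finset.mul_sum]

end Helpers

theorem stmt_16 (n r : ℕ) (hn : 0 < n) (hr : 3 ≤ r)
    (E : Finset (Finset (Fin n))) (hE : ∀ e ∈ E, e.card = r) (hc : hConn E) :
    specRad (adjT r E) =
        ((1 / (n : ℝ)) * ∑ i, (hDeg E i : ℝ) ^ ((r : ℝ) / ((r : ℝ) - 1)))
          ^ (((r : ℝ) - 1) / (r : ℝ)) ↔
      ∃ d : ℕ, ∀ i, hDeg E i = d := by
  classical
  have hr0 : 0 < r := by omega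
  have hrR : (0:ℝ) < r := by exact_mod_cast hr0
  have hrR1 : (0:ℝ) < (r:ℝ) - 1 := by
    have : (3:ℝ) ≤ r := by exact_mod_cast hr
    linarith
  have hnR : (0:ℝ) < n := by exact_mod_cast hn
  set Q : Set ℝ :=
    {q : ℝ | ∃ x : Fin n → ℝ, (∀ i, 0 ≤ x i) ∧ (∑ i, x i ^ r = 1) ∧ q = form (adjT r E) x}
    with hQdef
  have hspec : specRad (adjT r E) = sSup Q := rfl
  -- upper bound for members of Q
  have hub : ∀ q ∈ Q, q ≤ ∑ i, (hDeg E i : ℝ) := by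
    rintro q ⟨x, hx, hxn, rfl⟩
    rw [form_adjT hr0 E hE x]
    refine le_trans (prod_le_deg_sum hr E hE x hx) (Finset.sum_le_sum ?_)
    intro i _
    have h1 : x i ^ r ≤ 1 := by
      rw [← hxn]
      exact Finset.single_le_sum (fun j _ => pow_nonneg (hx j) r) (Finset.mem_univ i)
    have h2 : (0:ℝ) ≤ (hDeg E i : ℝ) := Nat.cast_nonneg _
    nlinarith
  have hbdd : BddAbove Q := ⟨∑ i, (hDeg E i : ℝ), fun q hq => hub q hq⟩
  -- the uniform vector gives average degree
  set x0 : Fin n → ℝ := fun _ => ((n:ℝ)⁻¹) ^ ((r:ℝ)⁻¹) with hx0def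
  have hx0nn : ∀ i, 0 ≤ x0 i := fun i => Real.rpow_nonneg (by positivity) _
  have hx0r : (((n:ℝ)⁻¹) ^ ((r:ℝ)⁻¹)) ^ r = (n:ℝ)⁻¹ := by
    rw [← Real.rpow_natCast (((n:ℝ)⁻¹) ^ ((r:ℝ)⁻¹)) r, ← Real.rpow_mul (by positivity),
      inv_mul_cancel₀ (ne_of_gt hrR), Real.rpow_one]
  have hx0norm : ∑ i, x0 i ^ r = 1 := by
    rw [Finset.sum_congr rfl (fun i _ => hx0r), Finset.sum_const, Finset.card_univ,
      Fintype.card_fin, nsmul_eq_mul, mul_inv_cancel₀ (ne_of_gt hnR)]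
  have hdegsum : ∑ i, (hDeg E i : ℝ) = (r : ℝ) * E.card := by
    have h := (edge_vertex_sum E (fun _ => (1:ℝ))).symm
    simp only [mul_one] at h
    rw [h]
    have h2 : ∀ e ∈ E, ∑ _v ∈ e, (1:ℝ) = (r:ℝ) := by
      intro e he
      rw [Finset.sum_const, nsmul_eq_mul, mul_one, hE e he]
    rw [Finset.sum_congr rfl h2, Finset.sum_const, nsmul_eq_mul, mul_comm]
  have hq0 : form (adjT r E) x0 = (∑ i, (hDeg E i : ℝ)) / n := by
    rw [form_adjT hr0 E hE x0, hdegsum]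
    have : ∀ e ∈ E, ∏ v ∈ e, x0 v = (n:ℝ)⁻¹ := by
      intro e he
      rw [Finset.prod_const, hE e he]
      exact hx0r
    rw [Finset.sum_congr rfl this, Finset.sum_const, nsmul_eq_mul]
    field_simp
  have hq0mem : (∑ i, (hDeg E i : ℝ)) / n ∈ Q := ⟨x0, hx0nn, hx0norm, hq0.symm⟩
  constructor
  · -- equality → regular
    intro heq
    by_contra hirr
    push_neg at hirr
    set w : Fin n := ⟨0, hn⟩ with hw
    obtain ⟨u, hu⟩ := hirr (hDeg E w)
    have huw : u ≠ w := fun h => hu (by rw [h])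
    have hdeg1 : ∀ v : Fin n, 1 ≤ hDeg E v := by
      intro v
      have hz : ∃ z : Fin n, z ≠ v := by
        rcases eq_or_ne v u with h | h
        · exact ⟨w, fun hcon => huw (hcon.trans h).symm⟩
        · exact ⟨u, fun hcon => h (by rw [hcon])⟩
      obtain ⟨z, hz⟩ := hz
      rcases Relation.ReflTransGen.cases_head (hc v z) with h | ⟨m, ⟨e, heE, hve, _⟩, _⟩
      · exact absurd h (fun hvz => hz hvz.symm)
      · have : 0 < (E.filter (fun e => v ∈ e)).card :=
          Finset.card_pos.mpr ⟨e, Finset.mem_filter.mpr ⟨heE, hve⟩⟩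
        rw [hDeg]; omega
    have hdegR : ∀ v, (0:ℝ) < (hDeg E v : ℝ) := by
      intro v
      have := hdeg1 v
      exact_mod_cast Nat.lt_of_lt_of_le Nat.zero_lt_one this
    set T : ℝ := ∑ i, (hDeg E i : ℝ) ^ ((r : ℝ) / ((r : ℝ) - 1)) with hT
    have hTpos : 0 < T :=
      Finset.sum_pos (fun i _ => Real.rpow_pos_of_pos (hdegR i) _) ⟨w, Finset.mem_univ w⟩
    set K : ℝ := ((n:ℝ)/T) ^ ((r:ℝ)⁻¹) with hK
    have hKpos : 0 < K := Real.rpow_pos_of_pos (div_pos hnR hTpos) _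
    set c : Fin n → ℝ := fun i => (hDeg E i : ℝ) ^ (((r:ℝ)-1)⁻¹) * K with hcdef
    have hcpos : ∀ i, 0 < c i := fun i => mul_pos (Real.rpow_pos_of_pos (hdegR i) _) hKpos
    have hcr : ∀ i, c i ^ r = (hDeg E i : ℝ) ^ ((r : ℝ) / ((r : ℝ) - 1)) * ((n:ℝ)/T) := by
      intro i
      rw [hcdef, mul_pow]
      congr 1
      · rw [← Real.rpow_natCast ((hDeg E i : ℝ) ^ (((r:ℝ)-1)⁻¹)) r,
          ← Real.rpow_mul (le_of_lt (hdegR i))]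
        congr 1
        rw [inv_mul_eq_div]
      · rw [hK, ← Real.rpow_natCast (((n:ℝ)/T) ^ ((r:ℝ)⁻¹)) r,
          ← Real.rpow_mul (le_of_lt (div_pos hnR hTpos)),
          inv_mul_cancel₀ (ne_of_gt hrR), Real.rpow_one]
    have hsumcr : ∑ i, c i ^ r = (n:ℝ) := by
      rw [Finset.sum_congr rfl (fun i _ => hcr i), ← Finset.sum_mul, ← hT]
      field_simp
    set x : Fin n → ℝ := fun i => (((r:ℝ) - 1 + c i ^ r) / ((r:ℝ) * n)) ^ ((r:ℝ)⁻¹) with hxdef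
    have hZnn : ∀ i, (0:ℝ) ≤ (r:ℝ) - 1 + c i ^ r := by
      intro i
      have := pow_nonneg (le_of_lt (hcpos i)) r
      linarith
    have hxnn : ∀ i, 0 ≤ x i := fun i =>
      Real.rpow_nonneg (div_nonneg (hZnn i) (by positivity)) _
    have hxr : ∀ i, x i ^ r = ((r:ℝ) - 1 + c i ^ r) / ((r:ℝ) * n) := by
      intro i
      rw [hxdef, ← Real.rpow_natCast ((((r:ℝ) - 1 + c i ^ r) / ((r:ℝ) * n)) ^ ((r:ℝ)⁻¹)) r,
        ← Real.rpow_mul (div_nonneg (hZnn i) (by positivity)),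
        inv_mul_cancel₀ (ne_of_gt hrR), Real.rpow_one]
    have hxnorm : ∑ i, x i ^ r = 1 := by
      rw [Finset.sum_congr rfl (fun i _ => hxr i), ← Finset.sum_div, Finset.sum_add_distrib,
        Finset.sum_const, Finset.card_univ, Fintype.card_fin, nsmul_eq_mul, hsumcr]
      field_simp
      ring
    have hqle : form (adjT r E) x ≤ sSup Q := le_csSup hbdd ⟨x, hxnn, hxnorm, rfl⟩
    have hedge_eq : ∀ e ∈ E, ∏ v ∈ e, x v
        = (∏ v ∈ e, ((r:ℝ) - 1 + c v ^ r) ^ ((r:ℝ)⁻¹)) / ((r:ℝ) * n) := by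
      intro e he
      have hsplit : ∀ v ∈ e, x v
          = ((r:ℝ) - 1 + c v ^ r) ^ ((r:ℝ)⁻¹) / (((r:ℝ)*n) ^ ((r:ℝ)⁻¹)) := by
        intro v _
        rw [hxdef]
        exact Real.div_rpow (hZnn v) (by positivity) _
      rw [Finset.prod_congr rfl hsplit, Finset.prod_div_distrib, Finset.prod_const, hE e he]
      congr 1
      rw [← Real.rpow_natCast ((((r:ℝ)*n) ^ ((r:ℝ)⁻¹))) r, ← Real.rpow_mul (by positivity),
        inv_mul_cancel₀ (ne_of_gt hrR), Real.rpow_one]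
    have hweak : ∀ e ∈ E, ∑ v ∈ e, c v ≤ ∏ v ∈ e, ((r:ℝ) - 1 + c v ^ r) ^ ((r:ℝ)⁻¹) :=
      fun e he => claimP_weak hr e (hE e he) c (fun v _ => le_of_lt (hcpos v))
    have hcne : c u ≠ c w := by
      intro hcc
      apply hu
      have h1 : (hDeg E u:ℝ) ^ (((r:ℝ)-1)⁻¹) = (hDeg E w:ℝ) ^ (((r:ℝ)-1)⁻¹) :=
        mul_right_cancel₀ (ne_of_gt hKpos) hcc
      have h2 := congrArg (fun y : ℝ => y ^ ((r:ℝ)-1)) h1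
      rw [← Real.rpow_mul (le_of_lt (hdegR u)), ← Real.rpow_mul (le_of_lt (hdegR w)),
        inv_mul_cancel₀ (ne_of_gt hrR1), Real.rpow_one, Real.rpow_one] at h2
      exact_mod_cast h2
    have hv0 : ∃ v0, c v0 ≠ 1 := by
      rcases eq_or_ne (c u) 1 with h | h
      · exact ⟨w, fun hcw => hcne (by rw [h, hcw])⟩
      · exact ⟨u, h⟩
    obtain ⟨v0, hv0ne⟩ := hv0
    have hestar : ∃ estar ∈ E, v0 ∈ estar := by
      have h1 := hdeg1 v0
      rw [hDeg] at h1
      have h2 : 0 < (E.filter (fun e => v0 ∈ e)).card := by omega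
      obtain ⟨estar, hes⟩ := Finset.card_pos.mp h2
      exact ⟨estar, (Finset.mem_filter.mp hes).1, (Finset.mem_filter.mp hes).2⟩
    obtain ⟨estar, hestarE, hv0estar⟩ := hestar
    have hstrict : ∑ v ∈ estar, c v < ∏ v ∈ estar, ((r:ℝ) - 1 + c v ^ r) ^ ((r:ℝ)⁻¹) :=
      claimP_strict hr estar (hE estar hestarE) c (fun v _ => le_of_lt (hcpos v))
        ⟨v0, hv0estar, hv0ne⟩
    have hsum_lt : ∑ e ∈ E, ∑ v ∈ e, c v
        < ∑ e ∈ E, ∏ v ∈ e, ((r:ℝ) - 1 + c v ^ r) ^ ((r:ℝ)⁻¹) :=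
      Finset.sum_lt_sum hweak ⟨estar, hestarE, hstrict⟩
    have hqval : form (adjT r E) x
        = (∑ e ∈ E, ∏ v ∈ e, ((r:ℝ) - 1 + c v ^ r) ^ ((r:ℝ)⁻¹)) / n := by
      rw [form_adjT hr0 E hE x, Finset.sum_congr rfl hedge_eq, ← Finset.sum_div]
      field_simp
    have hdc : ∑ e ∈ E, ∑ v ∈ e, c v = T * K := by
      rw [edge_vertex_sum E c]
      have h1 : ∀ i : Fin n, (hDeg E i : ℝ) * c i
          = ((hDeg E i : ℝ) ^ ((r : ℝ) / ((r : ℝ) - 1))) * K := by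
        intro i
        rw [hcdef, ← mul_assoc]
        congr 1
        rw [mul_comm, ← Real.rpow_add_one (ne_of_gt (hdegR i))]
        congr 1
        field_simp
        ring
      rw [Finset.sum_congr rfl (fun i _ => h1 i), ← Finset.sum_mul, ← hT]
    have hs : (0:ℝ) < T/n := div_pos hTpos hnR
    have hTK : (T * K)/n = ((1/(n:ℝ)) * T) ^ (((r:ℝ)-1)/(r:ℝ)) := by
      have h2 : ((1/(n:ℝ)) * T) = T/n := by ring
      rw [h2, hK]
      have h3 : (n:ℝ)/T = (T/n)⁻¹ := by
        rw [inv_div]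
      rw [h3, Real.inv_rpow (le_of_lt hs)]
      have h4 : (T/n) ^ (((r:ℝ)-1)/(r:ℝ)) * (T/n) ^ ((r:ℝ)⁻¹) = T/n := by
        rw [← Real.rpow_add hs]
        have h5 : ((r:ℝ)-1)/(r:ℝ) + (r:ℝ)⁻¹ = 1 := by
          field_simp
          ring
        rw [h5, Real.rpow_one]
      have h6 : (0:ℝ) < (T/(n:ℝ)) ^ ((r:ℝ)⁻¹) := Real.rpow_pos_of_pos hs _
      calc T * ((T/(n:ℝ)) ^ ((r:ℝ)⁻¹))⁻¹ / (n:ℝ)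
          = ((T/(n:ℝ)) ^ (((r:ℝ)-1)/(r:ℝ)) * (T/(n:ℝ)) ^ ((r:ℝ)⁻¹))
              * ((T/(n:ℝ)) ^ ((r:ℝ)⁻¹))⁻¹ := by
            rw [h4]; ring
        _ = (T/(n:ℝ)) ^ (((r:ℝ)-1)/(r:ℝ)) := mul_inv_cancel_right₀ (ne_of_gt h6) _
    have hlt : ((1/(n:ℝ)) * T) ^ (((r:ℝ)-1)/(r:ℝ)) < form (adjT r E) x := by
      rw [hqval, ← hTK, ← hdc]
      exact (div_lt_div_iff_of_pos_right hnR).mpr hsum_lt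
    rw [hspec] at heq
    rw [heq] at hqle
    linarith [hlt, hqle]

  · -- regular → equality
    rintro ⟨d, hd⟩
    have hdsum : ∑ i, (hDeg E i : ℝ) = (n : ℝ) * d := by
      rw [Finset.sum_congr rfl (fun i _ => by rw [hd i]), Finset.sum_const, Finset.card_univ,
        Fintype.card_fin, nsmul_eq_mul]
    have hsup : sSup Q = (d : ℝ) := by
      apply le_antisymm
      · apply csSup_le ⟨_, hq0mem⟩
        rintro q ⟨x, hx, hxn, rfl⟩
        rw [form_adjT hr0 E hE x]
        refine le_trans (prod_le_deg_sum hr E hE x hx) ?_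
        have : ∀ i : Fin n, (hDeg E i : ℝ) * x i ^ r = (d:ℝ) * x i ^ r := by
          intro i; rw [hd i]
        rw [Finset.sum_congr rfl (fun i _ => this i), ← Finset.mul_sum, hxn, mul_one]
      · have : (∑ i, (hDeg E i : ℝ)) / n = (d : ℝ) := by
          rw [hdsum]; field_simp
        rw [← this]
        exact le_csSup hbdd hq0mem
    rw [hspec, hsup]
    -- now compute the RHS
    have hrhs : ∀ i : Fin n, (hDeg E i : ℝ) ^ ((r : ℝ) / ((r : ℝ) - 1))
        = (d : ℝ) ^ ((r : ℝ) / ((r : ℝ) - 1)) := fun i => by rw [hd i]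
    rw [Finset.sum_congr rfl (fun i _ => hrhs i), Finset.sum_const, Finset.card_univ,
      Fintype.card_fin, nsmul_eq_mul, ← mul_assoc, one_div, inv_mul_cancel₀ (ne_of_gt hnR),
      one_mul, ← Real.rpow_mul (Nat.cast_nonneg d)]
    rw [div_mul_div_comm, mul_comm ((r:ℝ) - 1) (r:ℝ), div_self (by positivity), Real.rpow_one]
end

section
/- Let H be a connected r-uniform hypergraph and H̃ the product hypergraph on V(H)×[r] (edges obtained from edges of H paired with pairwise-distinct second coordinates). Then Q(H̃) = (r-1)!·(D(H) ⊗ I_r) + A(H) ⊗ B, where I_r is the order-r dimension-r unit tensor and B is the tensor with entries 1 exactly on tuples of pairwise distinct indices; and ρ(Q(H̃)) = (r-1)!·ρ(Q(H)). -/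
/-- The order-`r` diagonal tensor with diagonal entries `d i`. -/
def diagT {V : Type*} [Fintype V] [DecidableEq V] {r : ℕ} (d : V → ℝ) :
    (Fin r → V) → ℝ :=
  fun t => ∑ i, if ∀ k, t k = i then d i else 0

/-- Edge set of the product hypergraph H̃ on `V × Fin r`: a set of `r` pairs whose
first coordinates form an edge of `H` and whose second coordinates are pairwise
distinct. -/
def tildeE {n : ℕ} (r : ℕ) (E : Finset (Finset (Fin n))) :
    Finset (Finset (Fin n × Fin r)) :=
  Finset.univ.filter
    (fun S => S.card = r ∧ S.image Prod.fst ∈ E ∧ (S.image Prod.snd).card = r)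

/-- Direct (Kronecker) product of two order-`r` real tensors. -/
def kronR {α β : Type*} {r : ℕ} (A : (Fin r → α) → ℝ) (B : (Fin r → β) → ℝ) :
    (Fin r → α × β) → ℝ :=
  fun t => A (fun k => (t k).1) * B (fun k => (t k).2)

/-- The order-`r`, dimension-`r` unit tensor: entry `1` iff all indices are equal. -/
def idT (r : ℕ) : (Fin r → Fin r) → ℝ :=
  fun t => if ∃ j, ∀ k, t k = j then (1 : ℝ) else 0

open Finset in
lemma swap_image {α : Type*} [DecidableEq α] (S : Finset α) {q q' : α}
    (hq : q ∈ S) (hq' : q' ∈ S) : S.image (Equiv.swap q q') = S := by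
  apply Finset.eq_of_subset_of_card_le
  · intro x hx
    rcases Finset.mem_image.1 hx with ⟨a, ha, rfl⟩
    rcases eq_or_ne a q with rfl | h1
    · simpa [Equiv.swap_apply_left] using hq'
    rcases eq_or_ne a q' with rfl | h2
    · simpa [Equiv.swap_apply_right] using hq
    · rwa [Equiv.swap_apply_of_ne_of_ne h1 h2]
  · rw [Finset.card_image_of_injective _ (Equiv.swap q q').injective]

open Finset in
lemma count_onto {α : Type*} [Fintype α] [DecidableEq α] (r : ℕ) (S : Finset α)
    (hS : S.card = r) :
    (Finset.univ.filter (fun t : Fin r → α => Finset.image t Finset.univ = S)).card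
      = r.factorial := by
  classical
  set e := S.equivFin with he
  set g : Fin r → α := fun k => (e.symm (Fin.cast hS.symm k) : α) with hg
  have hginj : Function.Injective g := by
    intro a b hab
    have := e.symm.injective (Subtype.coe_injective hab)
    simpa [Fin.ext_iff] using this
  have hgmem : ∀ k, g k ∈ S := fun k => (e.symm (Fin.cast hS.symm k)).2
  have hgim : Finset.image g Finset.univ = S := by
    apply Finset.eq_of_subset_of_card_le
    · intro x hx
      rcases Finset.mem_image.1 hx with ⟨k, _, rfl⟩
      exact hgmem k
    · rw [Finset.card_image_of_injective _ hginj, Finset.card_univ, Fintype.card_fin, hS]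
  have hcp : (Finset.univ : Finset (Equiv.Perm (Fin r))).card = r.factorial := by
    rw [Finset.card_univ, Fintype.card_perm, Fintype.card_fin]
  rw [← hcp]
  refine (Finset.card_bij (s := (Finset.univ : Finset (Equiv.Perm (Fin r))))
    (t := Finset.univ.filter (fun t : Fin r → α => Finset.image t Finset.univ = S))
    (fun σ _ => g ∘ σ) ?_ ?_ ?_).symm
  · intro σ _
    simp only [Finset.mem_filter, Finset.mem_univ, true_and]
    have : Finset.image (g ∘ σ) Finset.univ = (Finset.univ.image (σ : Fin r → Fin r)).image g := by
      rw [Finset.image_image]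
    rw [this]
    have : Finset.univ.image (σ : Fin r → Fin r) = Finset.univ := by
      ext x
      simp only [Finset.mem_image, Finset.mem_univ, true_and, iff_true]
      exact ⟨σ.symm x, σ.apply_symm_apply x⟩
    rw [this, hgim]
  · intro σ _ σ' _ h
    apply Equiv.ext
    intro k
    exact hginj (congrFun h k)
  · intro t ht
    simp only [Finset.mem_filter, Finset.mem_univ, true_and] at ht
    have htmem : ∀ k, t k ∈ S := fun k => ht ▸ Finset.mem_image_of_mem t (Finset.mem_univ k)
    have htinj : Function.Injective t := by
      have : (Finset.univ.image t).card = (Finset.univ : Finset (Fin r)).card := by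
        rw [ht, hS, Finset.card_univ, Fintype.card_fin]
      have h2 := Finset.card_image_iff.1 this
      intro a b hab
      exact h2 (Finset.mem_coe.2 (Finset.mem_univ a)) (Finset.mem_coe.2 (Finset.mem_univ b)) hab
    set σ₀ : Fin r → Fin r := fun k => Fin.cast hS (e ⟨t k, htmem k⟩) with hσ₀
    have hσ₀inj : Function.Injective σ₀ := by
      intro a b hab
      have hval : (e ⟨t a, htmem a⟩ : Fin S.card) = e ⟨t b, htmem b⟩ := by
        apply Fin.ext
        have h2 := congrArg Fin.val hab
        exact h2
      have := e.injective hval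
      exact htinj (congrArg Subtype.val this)
    have hbij := (Finite.injective_iff_bijective).1 hσ₀inj
    refine ⟨Equiv.ofBijective σ₀ hbij, Finset.mem_univ _, ?_⟩
    funext k
    simp only [Function.comp_apply, Equiv.ofBijective_apply, hg, hσ₀]
    simp [Fin.cast_cast]

open Finset in
lemma count_onto_fix {α : Type*} [Fintype α] [DecidableEq α] (r : ℕ) (hr : 1 ≤ r)
    (S : Finset α) (hS : S.card = r) (k₀ : Fin r) (p : α) (hp : p ∈ S) :
    (Finset.univ.filter
        (fun t : Fin r → α => Finset.image t Finset.univ = S ∧ t k₀ = p)).card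
      = (r-1).factorial := by
  classical
  set F : α → ℕ := fun q => (Finset.univ.filter
      (fun t : Fin r → α => Finset.image t Finset.univ = S ∧ t k₀ = q)).card with hF
  have hFeq : ∀ q ∈ S, ∀ q' ∈ S, F q = F q' := by
    intro q hq q' hq'
    apply Finset.card_bij' (fun t _ => (Equiv.swap q q') ∘ t)
      (fun t _ => (Equiv.swap q q') ∘ t)
    · intro t ht
      simp only [Finset.mem_filter, Finset.mem_univ, true_and] at ht ⊢
      constructor
      · rw [← Finset.image_image, ht.1, swap_image S hq hq']
      · simp [Function.comp, ht.2, Equiv.swap_apply_left]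
    · intro t ht
      simp only [Finset.mem_filter, Finset.mem_univ, true_and] at ht ⊢
      constructor
      · rw [← Finset.image_image, ht.1, swap_image S hq hq']
      · simp [Function.comp, ht.2, Equiv.swap_apply_right]
    · intro t _
      funext k
      simp [Function.comp, Equiv.swap_apply_self]
    · intro t _
      funext k
      simp [Function.comp, Equiv.swap_apply_self]
  have hsum : ∑ q ∈ S, F q = r.factorial := by
    rw [← count_onto r S hS]
    rw [Finset.card_eq_sum_card_fiberwise (f := fun t : Fin r → α => t k₀)
      (t := S) ?_]
    · apply Finset.sum_congr rfl
      intro q hq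
      rw [hF]
      rw [Finset.filter_filter]
    · intro t ht
      simp only [Finset.coe_filter, Set.mem_setOf_eq, Finset.mem_univ, true_and] at ht
      exact ht ▸ Finset.mem_image_of_mem t (Finset.mem_univ k₀)
  have hconst : ∑ q ∈ S, F q = S.card * F p := by
    rw [Finset.sum_congr rfl (fun q hq => hFeq q hq p hp), Finset.sum_const, smul_eq_mul]
  have hrpos : 0 < r := hr
  have hfact : r.factorial = r * (r-1).factorial := by
    obtain ⟨m, rfl⟩ := Nat.exists_eq_add_of_le hr
    simp [Nat.factorial_succ, Nat.add_comm]
  have : r * F p = r * (r-1).factorial := by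
    rw [← hfact, ← hsum, hconst, hS]
  exact Nat.eq_of_mul_eq_mul_left hrpos this

open Finset in
lemma inj_iff_image {r : ℕ} (b : Fin r → Fin r) :
    Function.Injective b ↔ Finset.image b Finset.univ = Finset.univ := by
  constructor
  · intro h
    apply Finset.eq_of_subset_of_card_le (Finset.subset_univ _)
    rw [Finset.card_image_of_injective _ h]
  · intro h
    have : (Finset.univ.image b).card = (Finset.univ : Finset (Fin r)).card := by rw [h]
    have h2 := Finset.card_image_iff.1 this
    exact fun a b hab => h2 (Finset.mem_coe.2 (Finset.mem_univ a))
      (Finset.mem_coe.2 (Finset.mem_univ b)) hab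

open Finset in
lemma key_iff {n r : ℕ} (E : Finset (Finset (Fin n))) (hE : ∀ e ∈ E, e.card = r)
    (t : Fin r → Fin n × Fin r) :
    Finset.image t Finset.univ ∈ tildeE r E ↔
      (Finset.image (fun k => (t k).1) Finset.univ ∈ E ∧
        Function.Injective (fun k => (t k).2)) := by
  classical
  have him1 : (Finset.image t Finset.univ).image Prod.fst
      = Finset.image (fun k => (t k).1) Finset.univ := by
    rw [Finset.image_image]; rfl
  have him2 : (Finset.image t Finset.univ).image Prod.snd
      = Finset.image (fun k => (t k).2) Finset.univ := by
    rw [Finset.image_image]; rfl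
  constructor
  · intro h
    rcases Finset.mem_filter.1 h with ⟨-, hcard, hfst, hsnd⟩
    rw [him1] at hfst
    rw [him2] at hsnd
    refine ⟨hfst, ?_⟩
    have : (Finset.univ.image (fun k => (t k).2)).card
        = (Finset.univ : Finset (Fin r)).card := by
      rw [hsnd, Finset.card_univ, Fintype.card_fin]
    have h2 := Finset.card_image_iff.1 this
    exact fun a b hab => h2 (Finset.mem_coe.2 (Finset.mem_univ a))
      (Finset.mem_coe.2 (Finset.mem_univ b)) hab
  · rintro ⟨hfst, hsnd⟩
    have htinj : Function.Injective t := fun a b hab => hsnd (congrArg Prod.snd hab)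
    refine Finset.mem_filter.2 ⟨Finset.mem_univ _, ?_, ?_, ?_⟩
    · rw [Finset.card_image_of_injective _ htinj, Finset.card_univ, Fintype.card_fin]
    · rwa [him1]
    · rw [him2, Finset.card_image_of_injective _ hsnd, Finset.card_univ, Fintype.card_fin]

open Finset in
lemma deg_tilde {n r : ℕ} (hr : 1 ≤ r) (E : Finset (Finset (Fin n)))
    (hE : ∀ e ∈ E, e.card = r) (i : Fin n) (j : Fin r) :
    hDeg (tildeE r E) (i, j) = (r-1).factorial * hDeg E i := by
  classical
  have k0 : Fin r := ⟨0, hr⟩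
  set T : Finset (Fin r → Fin n × Fin r) := Finset.univ.filter
    (fun t => Finset.image t Finset.univ ∈ tildeE r E ∧ t k0 = (i, j)) with hT
  have way1 : T.card = (r-1).factorial * hDeg (tildeE r E) (i, j) := by
    rw [Finset.card_eq_sum_card_fiberwise
      (f := fun t : Fin r → Fin n × Fin r => Finset.image t Finset.univ)
      (t := (tildeE r E).filter (fun S => (i, j) ∈ S)) ?_]
    · rw [Finset.sum_congr rfl (g := fun _ => (r-1).factorial) ?_, Finset.sum_const,
        smul_eq_mul, hDeg, mul_comm]
      intro S hS
      rcases Finset.mem_filter.1 hS with ⟨hS1, hS2⟩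
      have hScard : S.card = r := (Finset.mem_filter.1 hS1).2.1
      have heq : T.filter (fun t => Finset.image t Finset.univ = S)
          = Finset.univ.filter
            (fun t : Fin r → Fin n × Fin r =>
              Finset.image t Finset.univ = S ∧ t k0 = (i, j)) := by
        ext t
        simp only [hT, Finset.mem_filter, Finset.mem_univ, true_and]
        constructor
        · rintro ⟨⟨h1, h2⟩, h3⟩; exact ⟨h3, h2⟩
        · rintro ⟨h1, h2⟩; exact ⟨⟨h1 ▸ hS1, h2⟩, h1⟩
      rw [heq, count_onto_fix r hr S hScard k0 (i, j) hS2]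
    · intro t ht
      rcases Finset.mem_filter.1 ht with ⟨-, h1, h2⟩
      refine Finset.mem_filter.2 ⟨h1, ?_⟩
      exact h2 ▸ Finset.mem_image_of_mem t (Finset.mem_univ k0)
  have way2 : T.card = ((r-1).factorial * hDeg E i) * (r-1).factorial := by
    set A : Finset (Fin r → Fin n) := Finset.univ.filter
      (fun a => Finset.image a Finset.univ ∈ E ∧ a k0 = i) with hA
    set B : Finset (Fin r → Fin r) := Finset.univ.filter
      (fun b => Finset.image b Finset.univ = Finset.univ ∧ b k0 = j) with hB
    have hTcard : T.card = (A ×ˢ B).card := by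
      apply Finset.card_bij' (fun t _ => ((fun k => (t k).1), (fun k => (t k).2)))
        (fun p _ => fun k => (p.1 k, p.2 k))
      case hi =>
        intro t ht
        rcases Finset.mem_filter.1 ht with ⟨-, h1, h2⟩
        rw [key_iff E hE] at h1
        refine Finset.mem_product.2 ⟨?_, ?_⟩
        · exact Finset.mem_filter.2 ⟨Finset.mem_univ _, h1.1, congrArg Prod.fst h2⟩
        · exact Finset.mem_filter.2 ⟨Finset.mem_univ _,
            (inj_iff_image _).1 h1.2, congrArg Prod.snd h2⟩
      case hj =>
        intro p hp
        rcases Finset.mem_product.1 hp with ⟨hp1, hp2⟩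
        rcases Finset.mem_filter.1 hp1 with ⟨-, ha1, ha2⟩
        rcases Finset.mem_filter.1 hp2 with ⟨-, hb1, hb2⟩
        refine Finset.mem_filter.2 ⟨Finset.mem_univ _, ?_, ?_⟩
        · rw [key_iff E hE]
          exact ⟨ha1, (inj_iff_image _).2 hb1⟩
        · rw [Prod.ext_iff]; exact ⟨ha2, hb2⟩
      case left_inv => intro t _; funext k; rfl
      case right_inv => intro p _; rfl
    rw [hTcard, Finset.card_product]
    congr 1
    · rw [hA, Finset.card_eq_sum_card_fiberwise
        (f := fun a : Fin r → Fin n => Finset.image a Finset.univ)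
        (t := E.filter (fun e => i ∈ e)) ?_]
      · rw [Finset.sum_congr rfl (g := fun _ => (r-1).factorial) ?_, Finset.sum_const,
          smul_eq_mul, hDeg, mul_comm]
        intro e he
        rcases Finset.mem_filter.1 he with ⟨he1, he2⟩
        have heq : (Finset.univ.filter
              (fun a : Fin r → Fin n => Finset.image a Finset.univ ∈ E ∧ a k0 = i)).filter
              (fun a => Finset.image a Finset.univ = e)
            = Finset.univ.filter
              (fun a : Fin r → Fin n => Finset.image a Finset.univ = e ∧ a k0 = i) := by
          ext a
          simp only [Finset.mem_filter, Finset.mem_univ, true_and]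
          constructor
          · rintro ⟨⟨h1, h2⟩, h3⟩; exact ⟨h3, h2⟩
          · rintro ⟨h1, h2⟩; exact ⟨⟨h1 ▸ he1, h2⟩, h1⟩
        rw [heq, count_onto_fix r hr e (hE e he1) k0 i he2]
      · intro a ha
        rcases Finset.mem_filter.1 ha with ⟨-, h1, h2⟩
        refine Finset.mem_filter.2 ⟨h1, ?_⟩
        exact h2 ▸ Finset.mem_image_of_mem a (Finset.mem_univ k0)
    · rw [hB, count_onto_fix r hr Finset.univ
        (by rw [Finset.card_univ, Fintype.card_fin]) k0 j (Finset.mem_univ j)]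
  have hpos : 0 < (r-1).factorial := Nat.factorial_pos _
  have := way1.symm.trans way2
  have h2 : (r-1).factorial * hDeg (tildeE r E) (i, j)
      = (r-1).factorial * (hDeg E i * (r-1).factorial) := by
    rw [this]; ring
  rw [Nat.eq_of_mul_eq_mul_left hpos h2, mul_comm]

section PointwiseHelpers
variable {V : Type*} [Fintype V] [DecidableEq V] {r : ℕ}

lemma diagT_const (hr : 1 ≤ r) (d : V → ℝ) (i : V) :
    diagT (r := r) d (fun _ => i) = d i := by
  classical
  rw [diagT, Finset.sum_eq_single i]
  · simp
  · intro b _ hb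
    rw [if_neg]
    intro h
    exact hb ((h ⟨0, hr⟩).symm)
  · simp

lemma diagT_ne (d : V → ℝ) (t : Fin r → V) (h : ¬ ∃ i, ∀ k, t k = i) :
    diagT d t = 0 := by
  rw [diagT]
  apply Finset.sum_eq_zero
  intro i _
  rw [if_neg (fun hc => h ⟨i, hc⟩)]

end PointwiseHelpers

open Finset in
lemma adj_pointwise {n r : ℕ} (E : Finset (Finset (Fin n))) (hE : ∀ e ∈ E, e.card = r)
    (t : Fin r → Fin n × Fin r) :
    adjT r (tildeE r E) t =
      adjT r E (fun k => (t k).1) *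
        (if Function.Injective (fun k => (t k).2) then (1:ℝ) else 0) := by
  classical
  rw [adjT, adjT]
  by_cases h1 : Finset.image (fun k => (t k).1) Finset.univ ∈ E
  · by_cases h2 : Function.Injective (fun k => (t k).2)
    · rw [if_pos ((key_iff E hE t).2 ⟨h1, h2⟩), if_pos h1, if_pos h2, mul_one]
    · rw [if_neg (fun hc => h2 ((key_iff E hE t).1 hc).2), if_neg h2, mul_zero]
  · rw [if_neg (fun hc => h1 ((key_iff E hE t).1 hc).1), if_neg h1, zero_mul]

open Finset in
lemma diag_pointwise {n r : ℕ} (hr : 1 ≤ r) (E : Finset (Finset (Fin n)))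
    (hE : ∀ e ∈ E, e.card = r) (t : Fin r → Fin n × Fin r) :
    diagT (fun p => (hDeg (tildeE r E) p : ℝ)) t =
      ((r - 1).factorial : ℝ) * kronR (diagT (fun i => (hDeg E i : ℝ))) (idT r) t := by
  classical
  by_cases hc : ∃ p : Fin n × Fin r, ∀ k, t k = p
  · obtain ⟨⟨i, j⟩, hp⟩ := hc
    have ht : t = fun _ => (i, j) := funext hp
    subst ht
    rw [diagT_const hr, kronR]
    have h1 : (fun k : Fin r => ((fun _ => ((i : Fin n), (j : Fin r))) k).1) = fun _ => i := rfl
    have h2 : (fun k : Fin r => ((fun _ => ((i : Fin n), (j : Fin r))) k).2) = fun _ => j := rfl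
    rw [h1, h2, diagT_const hr, idT, if_pos ⟨j, fun _ => rfl⟩, mul_one,
      deg_tilde hr E hE i j]
    push_cast
    ring
  · rw [diagT_ne _ _ hc, kronR]
    by_cases h2 : ∃ j, ∀ k, (t k).2 = j
    · obtain ⟨j, hj⟩ := h2
      have h1 : ¬ ∃ i, ∀ k, (t k).1 = i := by
        rintro ⟨i, hi⟩
        exact hc ⟨(i, j), fun k => Prod.ext (hi k) (hj k)⟩
      rw [diagT_ne _ _ h1, zero_mul, mul_zero]
    · rw [idT, if_neg h2, mul_zero, mul_zero]

open Finset in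
open scoped Classical in
lemma card_inj (r : ℕ) :
    (Finset.univ.filter (fun σ : Fin r → Fin r => Function.Injective σ)).card
      = r.factorial := by
  classical
  have h : Finset.univ.filter (fun σ : Fin r → Fin r => Function.Injective σ)
      = Finset.univ.filter (fun σ : Fin r → Fin r =>
          Finset.image σ Finset.univ = Finset.univ) := by
    ext σ; simp [inj_iff_image]
  rw [h, count_onto r Finset.univ (by rw [Finset.card_univ, Fintype.card_fin])]

open Finset in
open scoped Classical in
lemma card_inj_fix (r : ℕ) (hr : 1 ≤ r) (k : Fin r) (j : Fin r) :
    ((Finset.univ.filter (fun σ : Fin r → Fin r => Function.Injective σ)).filter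
      (fun σ => σ k = j)).card = (r-1).factorial := by
  classical
  have h : (Finset.univ.filter (fun σ : Fin r → Fin r => Function.Injective σ)).filter
      (fun σ => σ k = j)
      = Finset.univ.filter (fun σ : Fin r → Fin r =>
          Finset.image σ Finset.univ = Finset.univ ∧ σ k = j) := by
    ext σ; simp [inj_iff_image, and_comm]
  rw [h, count_onto_fix r hr Finset.univ (by rw [Finset.card_univ, Fintype.card_fin])
    k j (Finset.mem_univ j)]

open Finset in
open scoped Classical in
lemma perm_bound (r : ℕ) (hr : 1 ≤ r) (Y : Fin r → Fin r → ℝ) (hY : ∀ k j, 0 ≤ Y k j)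
    (x : Fin r → ℝ) (hx : ∀ k, 0 ≤ x k) (hxr : ∀ k, x k ^ r = ∑ j, Y k j ^ r) :
    ∑ σ ∈ Finset.univ.filter (fun σ : Fin r → Fin r => Function.Injective σ),
      ∏ k, Y k (σ k) ≤ ((r-1).factorial : ℝ) * ∏ k, x k := by
  classical
  have hrR : (0:ℝ) < r := by exact_mod_cast hr
  by_cases hzero : ∃ k, x k = 0
  · obtain ⟨k, hk⟩ := hzero
    have hrow : ∀ j, Y k j = 0 := by
      intro j
      have hsum : ∑ j, Y k j ^ r = 0 := by rw [← hxr k, hk, zero_pow (by omega)]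
      have := (Finset.sum_eq_zero_iff_of_nonneg
        (fun j _ => pow_nonneg (hY k j) r)).1 hsum j (Finset.mem_univ j)
      exact pow_eq_zero_iff (by omega) |>.1 this
    have hL : ∑ σ ∈ Finset.univ.filter
        (fun σ : Fin r → Fin r => Function.Injective σ), ∏ k', Y k' (σ k') = 0 := by
      apply Finset.sum_eq_zero
      intro σ _
      exact Finset.prod_eq_zero (Finset.mem_univ k) (hrow (σ k))
    rw [hL, Finset.prod_eq_zero (Finset.mem_univ k) hk, mul_zero]
  · push_neg at hzero
    have hxpos : ∀ k, 0 < x k := fun k => lt_of_le_of_ne (hx k) (Ne.symm (hzero k))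
    set z : Fin r → Fin r → ℝ := fun k j => Y k j / x k with hz
    have hznn : ∀ k j, 0 ≤ z k j := fun k j => div_nonneg (hY k j) (hx k)
    have hzsum : ∀ k, ∑ j, z k j ^ r = 1 := by
      intro k
      rw [hz]
      simp only [div_pow]
      rw [← Finset.sum_div, ← hxr k, div_self (pow_ne_zero r (hzero k))]
    have key : ∀ σ : Fin r → Fin r,
        ∏ k, z k (σ k) ≤ ∑ k, (r:ℝ)⁻¹ * z k (σ k) ^ r := by
      intro σ
      have := Real.geom_mean_le_arith_mean_weighted Finset.univ
        (fun _ => (r:ℝ)⁻¹) (fun k => z k (σ k) ^ r)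
        (fun _ _ => by positivity)
        (by rw [Finset.sum_const, Finset.card_univ, Fintype.card_fin, nsmul_eq_mul,
              mul_inv_cancel₀ (ne_of_gt hrR)])
        (fun k _ => pow_nonneg (hznn k (σ k)) r)
      calc ∏ k, z k (σ k) = ∏ k, (z k (σ k) ^ r) ^ ((r:ℝ)⁻¹) := by
            apply Finset.prod_congr rfl
            intro k _
            rw [← Real.rpow_natCast (z k (σ k)) r, ← Real.rpow_mul (hznn k (σ k)),
              mul_inv_cancel₀ (ne_of_gt hrR), Real.rpow_one]
        _ ≤ ∑ k, (r:ℝ)⁻¹ * z k (σ k) ^ r := this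
    have hYz : ∀ k j, Y k j = x k * z k j := by
      intro k j
      rw [hz]
      simp only []
      rw [mul_comm, div_mul_cancel₀ _ (hzero k)]
    have step1 : ∑ σ ∈ Finset.univ.filter
        (fun σ : Fin r → Fin r => Function.Injective σ), ∏ k, Y k (σ k)
        ≤ (∏ k, x k) * ∑ σ ∈ Finset.univ.filter
            (fun σ : Fin r → Fin r => Function.Injective σ),
            ∑ k, (r:ℝ)⁻¹ * z k (σ k) ^ r := by
      rw [Finset.mul_sum]
      apply Finset.sum_le_sum
      intro σ _
      have : ∏ k, Y k (σ k) = (∏ k, x k) * ∏ k, z k (σ k) := by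
        rw [← Finset.prod_mul_distrib]
        exact Finset.prod_congr rfl (fun k _ => hYz k (σ k))
      rw [this]
      exact mul_le_mul_of_nonneg_left (key σ)
        (Finset.prod_nonneg (fun k _ => hx k))
    have step2 : ∑ σ ∈ Finset.univ.filter
        (fun σ : Fin r → Fin r => Function.Injective σ),
        ∑ k, (r:ℝ)⁻¹ * z k (σ k) ^ r = ((r-1).factorial : ℝ) := by
      rw [Finset.sum_comm]
      have inner : ∀ k : Fin r, ∑ σ ∈ Finset.univ.filter
          (fun σ : Fin r → Fin r => Function.Injective σ),
          (r:ℝ)⁻¹ * z k (σ k) ^ r = (r:ℝ)⁻¹ * ((r-1).factorial : ℝ) := by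
        intro k
        rw [← Finset.mul_sum]
        congr 1
        rw [← Finset.sum_fiberwise_of_maps_to (g := fun σ : Fin r → Fin r => σ k)
          (t := Finset.univ) (fun σ _ => Finset.mem_univ (σ k))]
        have : ∀ j : Fin r, ∑ σ ∈ (Finset.univ.filter
            (fun σ : Fin r → Fin r => Function.Injective σ)).filter
              (fun σ => σ k = j), z k (σ k) ^ r
            = ((r-1).factorial : ℝ) * z k j ^ r := by
          intro j
          rw [Finset.sum_congr rfl (g := fun _ => z k j ^ r) ?_, Finset.sum_const,
            card_inj_fix r hr k j, nsmul_eq_mul]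
          intro σ hσ
          rw [(Finset.mem_filter.1 hσ).2]
        rw [Finset.sum_congr rfl (fun j _ => this j), ← Finset.mul_sum, hzsum k, mul_one]
      rw [Finset.sum_congr rfl (fun k _ => inner k), Finset.sum_const, Finset.card_univ,
        Fintype.card_fin, nsmul_eq_mul]
      field_simp
    calc ∑ σ ∈ Finset.univ.filter
          (fun σ : Fin r → Fin r => Function.Injective σ), ∏ k, Y k (σ k)
        ≤ (∏ k, x k) * ((r-1).factorial : ℝ) := by rw [← step2]; exact step1
      _ = ((r-1).factorial : ℝ) * ∏ k, x k := mul_comm _ _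

lemma form_add {V : Type*} [Fintype V] {r : ℕ} (T₁ T₂ : (Fin r → V) → ℝ) (x : V → ℝ) :
    form (fun t => T₁ t + T₂ t) x = form T₁ x + form T₂ x := by
  rw [form, form, form, ← Finset.sum_add_distrib]
  exact Finset.sum_congr rfl (fun t _ => by ring)

lemma form_diag {V : Type*} [Fintype V] [DecidableEq V] {r : ℕ} (d : V → ℝ) (x : V → ℝ) :
    form (diagT (r := r) d) x = ∑ i, d i * x i ^ r := by
  classical
  rw [form]
  simp only [diagT, Finset.sum_mul]
  rw [Finset.sum_comm]
  apply Finset.sum_congr rfl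
  intro i _
  have h1 : ∀ t : Fin r → V, (if ∀ k, t k = i then d i else 0) * ∏ k, x (t k)
      = if t = (fun _ => i) then d i * ∏ k, x (t k) else 0 := by
    intro t
    by_cases h : ∀ k, t k = i
    · rw [if_pos h, if_pos (funext h)]
    · rw [if_neg h, if_neg (fun hc => h (fun k => congrFun hc k)), zero_mul]
  rw [Finset.sum_congr rfl (fun t _ => h1 t), Finset.sum_ite_eq' Finset.univ
    (fun _ => i) (fun t => d i * ∏ k, x (t k)), if_pos (Finset.mem_univ _)]
  rw [Finset.prod_const, Finset.card_univ, Fintype.card_fin]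

open Finset in
lemma main_le {n r : ℕ} (hr : 1 ≤ r) (E : Finset (Finset (Fin n)))
    (hE : ∀ e ∈ E, e.card = r) (y : Fin n × Fin r → ℝ) (hy : ∀ p, 0 ≤ y p) :
    ∃ x : Fin n → ℝ, (∀ i, 0 ≤ x i) ∧ (∑ i, x i ^ r = ∑ p, y p ^ r) ∧
      form (fun t : Fin r → Fin n × Fin r =>
          diagT (fun p => (hDeg (tildeE r E) p : ℝ)) t + adjT r (tildeE r E) t) y ≤
        ((r - 1).factorial : ℝ) *
          form (fun t : Fin r → Fin n =>
            diagT (fun i => (hDeg E i : ℝ)) t + adjT r E t) x := by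
  classical
  have hrR : (0:ℝ) < r := by exact_mod_cast hr
  set x : Fin n → ℝ := fun i => (∑ j, y (i, j) ^ r) ^ ((r:ℝ)⁻¹) with hxdef
  have hsnn : ∀ i : Fin n, 0 ≤ ∑ j, y (i, j) ^ r :=
    fun i => Finset.sum_nonneg (fun j _ => pow_nonneg (hy _) r)
  have hxnn : ∀ i, 0 ≤ x i := fun i => Real.rpow_nonneg (hsnn i) _
  have hxr : ∀ i, x i ^ r = ∑ j, y (i, j) ^ r := by
    intro i
    rw [hxdef]
    rw [← Real.rpow_natCast ((∑ j, y (i, j) ^ r) ^ ((r:ℝ)⁻¹)) r,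
      ← Real.rpow_mul (hsnn i), inv_mul_cancel₀ (ne_of_gt hrR), Real.rpow_one]
  have hsum : ∑ i, x i ^ r = ∑ p, y p ^ r := by
    rw [Finset.sum_congr rfl (fun i _ => hxr i), Fintype.sum_prod_type]
  refine ⟨x, hxnn, hsum, ?_⟩
  rw [form_add, form_add, mul_add]
  apply add_le_add
  · apply le_of_eq
    rw [form_diag, form_diag]
    have h0 : ∀ p : Fin n × Fin r, (hDeg (tildeE r E) p : ℝ) * y p ^ r
        = ((r-1).factorial : ℝ) * ((hDeg E p.1 : ℝ) * y p ^ r) := by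
      intro p
      rcases p with ⟨i, j⟩
      rw [deg_tilde hr E hE i j]
      push_cast
      ring
    rw [Finset.sum_congr rfl (fun p _ => h0 p), ← Finset.mul_sum]
    congr 1
    rw [Fintype.sum_prod_type]
    apply Finset.sum_congr rfl
    intro i _
    rw [hxr i, Finset.mul_sum]
  · have hsplit : form (adjT r (tildeE r E)) y
        = ∑ a : Fin r → Fin n, adjT r E a *
            ∑ b ∈ Finset.univ.filter (fun b : Fin r → Fin r => Function.Injective b),
              ∏ k, y (a k, b k) := by
      rw [form]
      rw [← Equiv.sum_comp (Equiv.arrowProdEquivProdArrow (Fin r) (fun _ => Fin n) (fun _ => Fin r)).symm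
        (fun t => adjT r (tildeE r E) t * ∏ k, y (t k))]
      rw [Fintype.sum_prod_type]
      apply Finset.sum_congr rfl
      intro a _
      have hterm : ∀ b : Fin r → Fin r,
          adjT r (tildeE r E)
              ((Equiv.arrowProdEquivProdArrow (Fin r) (fun _ => Fin n) (fun _ => Fin r)).symm (a, b)) *
            ∏ k, y ((Equiv.arrowProdEquivProdArrow (Fin r) (fun _ => Fin n) (fun _ => Fin r)).symm (a, b) k)
          = if Function.Injective b then adjT r E a * ∏ k, y (a k, b k) else 0 := by
        intro b
        rw [adj_pointwise E hE]
        show (adjT r E a * if Function.Injective b then (1:ℝ) else 0) *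
            ∏ k, y (a k, b k)
          = if Function.Injective b then adjT r E a * ∏ k, y (a k, b k) else 0
        split_ifs with hb
        · ring
        · ring
      rw [Finset.sum_congr rfl (fun b _ => hterm b), Finset.sum_filter, Finset.mul_sum]
      simp only [mul_ite, mul_zero]
    rw [hsplit]
    have hbound : ∀ a : Fin r → Fin n,
        adjT r E a * ∑ b ∈ Finset.univ.filter
            (fun b : Fin r → Fin r => Function.Injective b), ∏ k, y (a k, b k)
          ≤ adjT r E a * (((r-1).factorial : ℝ) * ∏ k, x (a k)) := by
      intro a
      apply mul_le_mul_of_nonneg_left _ (by rw [adjT]; positivity)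
      exact perm_bound r hr (fun k j => y (a k, j)) (fun k j => hy _)
        (fun k => x (a k)) (fun k => hxnn _) (fun k => hxr (a k))
    calc ∑ a : Fin r → Fin n, adjT r E a *
            ∑ b ∈ Finset.univ.filter (fun b : Fin r → Fin r => Function.Injective b),
              ∏ k, y (a k, b k)
        ≤ ∑ a : Fin r → Fin n, adjT r E a * (((r-1).factorial : ℝ) * ∏ k, x (a k)) :=
          Finset.sum_le_sum (fun a _ => hbound a)
      _ = ((r-1).factorial : ℝ) * form (adjT r E) x := by
          rw [form, Finset.mul_sum]
          exact Finset.sum_congr rfl (fun a _ => by ring)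

open Finset in
lemma main_eq {n r : ℕ} (hr : 1 ≤ r) (E : Finset (Finset (Fin n)))
    (hE : ∀ e ∈ E, e.card = r) (x : Fin n → ℝ) (hx : ∀ i, 0 ≤ x i) :
    ∃ y : Fin n × Fin r → ℝ, (∀ p, 0 ≤ y p) ∧ (∑ p, y p ^ r = ∑ i, x i ^ r) ∧
      form (fun t : Fin r → Fin n × Fin r =>
          diagT (fun p => (hDeg (tildeE r E) p : ℝ)) t + adjT r (tildeE r E) t) y =
        ((r - 1).factorial : ℝ) *
          form (fun t : Fin r → Fin n =>
            diagT (fun i => (hDeg E i : ℝ)) t + adjT r E t) x := by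
  classical
  have hrR : (0:ℝ) < r := by exact_mod_cast hr
  set c : ℝ := ((r:ℝ)⁻¹) ^ ((r:ℝ)⁻¹) with hcdef
  have hcnn : 0 ≤ c := Real.rpow_nonneg (by positivity) _
  have hcr : c ^ r = (r:ℝ)⁻¹ := by
    rw [hcdef, ← Real.rpow_natCast (((r:ℝ)⁻¹) ^ ((r:ℝ)⁻¹)) r,
      ← Real.rpow_mul (by positivity), inv_mul_cancel₀ (ne_of_gt hrR), Real.rpow_one]
  set y : Fin n × Fin r → ℝ := fun p => x p.1 * c with hydef
  have hynn : ∀ p, 0 ≤ y p := fun p => mul_nonneg (hx _) hcnn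
  have hysum : ∑ p, y p ^ r = ∑ i, x i ^ r := by
    rw [Fintype.sum_prod_type]
    have : ∀ i : Fin n, ∑ j : Fin r, y (i, j) ^ r = x i ^ r := by
      intro i
      rw [hydef]
      simp only [mul_pow]
      rw [Finset.sum_const, Finset.card_univ, Fintype.card_fin, nsmul_eq_mul, hcr]
      field_simp
    exact Finset.sum_congr rfl (fun i _ => this i)
  refine ⟨y, hynn, hysum, ?_⟩
  rw [form_add, form_add, mul_add]
  congr 1
  · rw [form_diag, form_diag, Fintype.sum_prod_type]
    have : ∀ i : Fin n, ∑ j : Fin r, (hDeg (tildeE r E) (i, j) : ℝ) * y (i, j) ^ r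
        = ((r-1).factorial : ℝ) * ((hDeg E i : ℝ) * x i ^ r) := by
      intro i
      have h2 : ∀ j : Fin r, (hDeg (tildeE r E) (i, j) : ℝ) * y (i, j) ^ r
          = ((r-1).factorial : ℝ) * (hDeg E i : ℝ) * (x i ^ r * c ^ r) := by
        intro j
        rw [deg_tilde hr E hE i j, hydef]
        push_cast
        ring
      rw [Finset.sum_congr rfl (fun j _ => h2 j), Finset.sum_const, Finset.card_univ,
        Fintype.card_fin, nsmul_eq_mul, hcr]
      field_simp
    rw [Finset.sum_congr rfl (fun i _ => this i), ← Finset.mul_sum]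
  · have hsplit : form (adjT r (tildeE r E)) y
        = ∑ a : Fin r → Fin n, adjT r E a *
            ∑ b ∈ Finset.univ.filter (fun b : Fin r → Fin r => Function.Injective b),
              ∏ k, y (a k, b k) := by
      rw [form]
      rw [← Equiv.sum_comp (Equiv.arrowProdEquivProdArrow (Fin r) (fun _ => Fin n) (fun _ => Fin r)).symm
        (fun t => adjT r (tildeE r E) t * ∏ k, y (t k))]
      rw [Fintype.sum_prod_type]
      apply Finset.sum_congr rfl
      intro a _
      have hterm : ∀ b : Fin r → Fin r,
          adjT r (tildeE r E)
              ((Equiv.arrowProdEquivProdArrow (Fin r) (fun _ => Fin n) (fun _ => Fin r)).symm (a, b)) *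
            ∏ k, y ((Equiv.arrowProdEquivProdArrow (Fin r) (fun _ => Fin n) (fun _ => Fin r)).symm (a, b) k)
          = if Function.Injective b then adjT r E a * ∏ k, y (a k, b k) else 0 := by
        intro b
        rw [adj_pointwise E hE]
        show (adjT r E a * if Function.Injective b then (1:ℝ) else 0) *
            ∏ k, y (a k, b k)
          = if Function.Injective b then adjT r E a * ∏ k, y (a k, b k) else 0
        split_ifs with hb
        · ring
        · ring
      rw [Finset.sum_congr rfl (fun b _ => hterm b), Finset.sum_filter, Finset.mul_sum]
      simp only [mul_ite, mul_zero]
    rw [hsplit]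
    have hfact : (r.factorial : ℝ) = r * (r-1).factorial := by
      obtain ⟨m, rfl⟩ := Nat.exists_eq_add_of_le hr
      push_cast [Nat.add_comm 1 m, Nat.factorial_succ]
      ring
    have hinner : ∀ a : Fin r → Fin n,
        ∑ b ∈ Finset.univ.filter (fun b : Fin r → Fin r => Function.Injective b),
          ∏ k, y (a k, b k) = ((r-1).factorial : ℝ) * ∏ k, x (a k) := by
      intro a
      have h1 : ∀ b : Fin r → Fin r, ∏ k, y (a k, b k) = (∏ k, x (a k)) * c ^ r := by
        intro b
        rw [hydef]
        simp only []
        rw [Finset.prod_mul_distrib, Finset.prod_const, Finset.card_univ, Fintype.card_fin]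
      rw [Finset.sum_congr rfl (fun b _ => h1 b), Finset.sum_const, card_inj r,
        nsmul_eq_mul, hcr, hfact]
      field_simp
    rw [Finset.sum_congr rfl (fun a _ => by rw [hinner a]), form, Finset.mul_sum]
    exact Finset.sum_congr rfl (fun a _ => by ring)

lemma form_bdd {V : Type*} [Fintype V] {r : ℕ} (hr : 1 ≤ r) (T : (Fin r → V) → ℝ)
    (hT : ∀ t, 0 ≤ T t) :
    BddAbove {q : ℝ | ∃ x : V → ℝ, (∀ i, 0 ≤ x i) ∧ (∑ i, x i ^ r = 1) ∧ q = form T x} := by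
  refine ⟨∑ t : Fin r → V, T t, ?_⟩
  rintro q ⟨x, hx, hs, rfl⟩
  have hx1 : ∀ i, x i ≤ 1 := by
    intro i
    have h1 : x i ^ r ≤ 1 := by
      rw [← hs]
      exact Finset.single_le_sum (fun j _ => pow_nonneg (hx j) r) (Finset.mem_univ i)
    by_contra hgt
    push_neg at hgt
    have h2 : (1:ℝ) < x i ^ r := one_lt_pow₀ hgt (by omega)
    linarith
  rw [form]
  apply Finset.sum_le_sum
  intro t _
  calc T t * ∏ k, x (t k) ≤ T t * 1 := by
        apply mul_le_mul_of_nonneg_left _ (hT t)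
        exact Finset.prod_le_one (fun k _ => hx (t k)) (fun k _ => hx1 (t k))
    _ = T t := mul_one _
lemma diag_nonneg {V : Type*} [Fintype V] [DecidableEq V] {r : ℕ} (d : V → ℝ)
    (hd : ∀ i, 0 ≤ d i) (t : Fin r → V) : 0 ≤ diagT d t := by
  apply Finset.sum_nonneg
  intro i _
  split_ifs with h
  · exact hd i
  · exact le_refl 0

lemma adj_nonneg {V : Type*} [DecidableEq V] {r : ℕ} (E : Finset (Finset V))
    (t : Fin r → V) : 0 ≤ adjT r E t := by
  rw [adjT]
  split_ifs with h
  · positivity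
  · exact le_refl 0

lemma spec_empty {V : Type*} [Fintype V] [IsEmpty V] {r : ℕ} (T : (Fin r → V) → ℝ) :
    specRad T = 0 := by
  have h : {q : ℝ | ∃ x : V → ℝ, (∀ i, 0 ≤ x i) ∧ (∑ i, x i ^ r = 1) ∧ q = form T x}
      = ∅ := by
    ext q
    simp only [Set.mem_setOf_eq, Set.mem_empty_iff_false, iff_false]
    rintro ⟨x, -, hs, -⟩
    simp at hs
  rw [specRad, h, Real.sSup_empty]

lemma specRad_scale {V W : Type*} [Fintype V] [Fintype W] {r : ℕ}
    (T₁ : (Fin r → V) → ℝ) (T₂ : (Fin r → W) → ℝ) (c : ℝ) (hc : 0 < c)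
    (hbdd : BddAbove {q : ℝ | ∃ x : V → ℝ,
      (∀ i, 0 ≤ x i) ∧ (∑ i, x i ^ r = 1) ∧ q = form T₁ x})
    (hne : ∃ x : V → ℝ, (∀ i, 0 ≤ x i) ∧ (∑ i, x i ^ r = 1))
    (h1 : ∀ y : W → ℝ, (∀ i, 0 ≤ y i) → (∑ i, y i ^ r = 1) → ∃ x : V → ℝ,
      (∀ i, 0 ≤ x i) ∧ (∑ i, x i ^ r = 1) ∧ form T₂ y ≤ c * form T₁ x)
    (h2 : ∀ x : V → ℝ, (∀ i, 0 ≤ x i) → (∑ i, x i ^ r = 1) → ∃ y : W → ℝ,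
      (∀ i, 0 ≤ y i) ∧ (∑ i, y i ^ r = 1) ∧ form T₂ y = c * form T₁ x) :
    specRad T₂ = c * specRad T₁ := by
  rw [specRad, specRad]
  set S₁ : Set ℝ := {q : ℝ | ∃ x : V → ℝ,
    (∀ i, 0 ≤ x i) ∧ (∑ i, x i ^ r = 1) ∧ q = form T₁ x} with hS₁
  set S₂ : Set ℝ := {q : ℝ | ∃ y : W → ℝ,
    (∀ i, 0 ≤ y i) ∧ (∑ i, y i ^ r = 1) ∧ q = form T₂ y} with hS₂
  obtain ⟨x₀, hx₀, hx₀s⟩ := hne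
  have hne₁ : S₁.Nonempty := ⟨form T₁ x₀, ⟨x₀, hx₀, hx₀s, rfl⟩⟩
  have hne₂ : S₂.Nonempty := by
    obtain ⟨y₀, hy₀, hy₀s, -⟩ := h2 x₀ hx₀ hx₀s
    exact ⟨form T₂ y₀, ⟨y₀, hy₀, hy₀s, rfl⟩⟩
  have hbdd₂ : BddAbove S₂ := by
    obtain ⟨M, hM⟩ := hbdd
    refine ⟨c * M, ?_⟩
    rintro q ⟨y, hy, hs, rfl⟩
    obtain ⟨x, hx, hxs, hle⟩ := h1 y hy hs
    exact hle.trans (mul_le_mul_of_nonneg_left (hM ⟨x, hx, hxs, rfl⟩) hc.le)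
  apply le_antisymm
  · apply csSup_le hne₂
    rintro q ⟨y, hy, hs, rfl⟩
    obtain ⟨x, hx, hxs, hle⟩ := h1 y hy hs
    exact hle.trans (mul_le_mul_of_nonneg_left
      (le_csSup hbdd ⟨x, hx, hxs, rfl⟩) hc.le)
  · have hle1 : sSup S₁ ≤ sSup S₂ / c := by
      apply csSup_le hne₁
      rintro q ⟨x, hx, hs, rfl⟩
      obtain ⟨y, hy, hys, heq⟩ := h2 x hx hs
      rw [le_div_iff₀ hc, mul_comm, ← heq]
      exact le_csSup hbdd₂ ⟨y, hy, hys, rfl⟩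
    calc c * sSup S₁ ≤ c * (sSup S₂ / c) := mul_le_mul_of_nonneg_left hle1 hc.le
      _ = sSup S₂ := by field_simp

theorem stmt_19 (n r : ℕ) (hr : 3 ≤ r) (E : Finset (Finset (Fin n)))
    (hE : ∀ e ∈ E, e.card = r) (hc : hConn E) :
    (∀ t : Fin r → Fin n × Fin r,
        diagT (fun p => (hDeg (tildeE r E) p : ℝ)) t + adjT r (tildeE r E) t =
          ((r - 1).factorial : ℝ) *
              kronR (diagT (fun i => (hDeg E i : ℝ))) (idT r) t +
            kronR (adjT r E)
              (fun s : Fin r → Fin r => if Function.Injective s then (1 : ℝ) else 0) t) ∧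
      specRad (fun t : Fin r → Fin n × Fin r =>
          diagT (fun p => (hDeg (tildeE r E) p : ℝ)) t + adjT r (tildeE r E) t) =
        ((r - 1).factorial : ℝ) *
          specRad (fun t : Fin r → Fin n =>
            diagT (fun i => (hDeg E i : ℝ)) t + adjT r E t) := by
  have hr1 : 1 ≤ r := by omega
  have hfp : (0:ℝ) < ((r-1).factorial : ℝ) := by exact_mod_cast Nat.factorial_pos _
  constructor
  · intro t
    rw [diag_pointwise hr1 E hE t, adj_pointwise E hE t]
    rfl
  · rcases Nat.eq_zero_or_pos n with hn | hn
    · subst hn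
      rw [spec_empty, spec_empty, mul_zero]
    · apply specRad_scale _ _ _ hfp
      · apply form_bdd hr1
        intro t
        exact add_nonneg (diag_nonneg _ (fun i => Nat.cast_nonneg _) t) (adj_nonneg E t)
      · refine ⟨fun i => if i = ⟨0, hn⟩ then 1 else 0, ?_, ?_⟩
        · intro i
          dsimp only
          split_ifs
          · norm_num
          · norm_num
        · dsimp only
          rw [Finset.sum_eq_single (⟨0, hn⟩ : Fin n)]
          · rw [if_pos rfl, one_pow]
          · intro b _ hb
            rw [if_neg hb, zero_pow (by omega)]
          · intro h
            exact absurd (Finset.mem_univ _) h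
      · intro y hy hys
        obtain ⟨x, hx, hxs, hle⟩ := main_le hr1 E hE y hy
        exact ⟨x, hx, hxs.trans hys, hle⟩
      · intro x hx hxs
        obtain ⟨y, hy, hys, heq⟩ := main_eq hr1 E hE x hx
        exact ⟨y, hy, hys.trans hxs, heq⟩
end
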